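/- arXiv:2509.09945 — 5 statements merged into one kernel-verified Lean document; each statement's English description precedes it below -/
import Mathlib

section
/- Let α ∈ [0,1] be irrational and let 0 < δ ≤ ∞. Then for every s > 1, the ω_s-Hausdorff measure of the exact resonance level set D(δ) vanishes: ℋ^{ω_s}(D(δ)) = 0. -/
open Filter MeasureTheory Set
open scoped ENNReal NNReal Classical

/-- Distance from `x : ℝ` to the nearest integer, i.e. `‖x‖_{ℝ/ℤ}`. -/
noncomputable def distZ (x : ℝ) : ℝ := |x - round x|

/-- The `ω`-Hausdorff measure of a set `S ⊆ ℝ`: the limit as `ε → 0⁺` (equivalently the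
supremum over `ε > 0`, by monotonicity) of the infimum of `∑ᵢ ω (bᵢ - aᵢ)` over countable
covers of `S` by intervals `(aᵢ, bᵢ)` of length at most `ε`. -/
noncomputable def gaugeHaus (ω : ℝ → ℝ) (S : Set ℝ) : ℝ≥0∞ :=
  ⨆ (ε : ℝ) (_ : 0 < ε),
    ⨅ (a : ℕ → ℝ) (b : ℕ → ℝ) (_ : S ⊆ ⋃ i, Set.Ioo (a i) (b i))
      (_ : ∀ i, a i ≤ b i ∧ b i - a i ≤ ε),
      ∑' i, ENNReal.ofReal (ω (b i - a i))

/-- The gauge function `ω_s(r) = (-log r)^{-s}` for `0 < r < 1`, and `ω_s(0) = 0`. -/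
noncomputable def omegaS (s : ℝ) (r : ℝ) : ℝ := if 0 < r then (-Real.log r) ^ (-s) else 0

/-- The resonance strength `δ(α, x) = limsup_{|k| → ∞} (-log ‖x - kα‖_{ℝ/ℤ}) / |k|`,
with the convention that it is `∞` when `x ≡ kα (mod ℤ)` for some `k ∈ ℤ`. -/

noncomputable def resStrength (α x : ℝ) : ℝ≥0∞ :=
  if ∃ k m : ℤ, x = (k : ℝ) * α + (m : ℝ) then ⊤
  else Filter.limsup
    (fun k : ℤ => ENNReal.ofReal (-Real.log (distZ (x - (k : ℝ) * α)) / |(k : ℝ)|))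
    Filter.cofinite

/-- The exact resonance level set `D(δ) = {x ∈ [0,1] : δ(α,x) = δ}`. -/
noncomputable def resSet (α : ℝ) (δ : ℝ≥0∞) : Set ℝ :=
  {x ∈ Set.Icc (0 : ℝ) 1 | resStrength α x = δ}

namespace ResCover

open scoped Topology

/-- Decoding of the resonance index `k` from an even-part index. -/
noncomputable def kOf (p : ℕ) : ℤ := (Denumerable.eqv ℤ).symm (p / 3)

/-- Decoding of an exceptional point index. -/
noncomputable def qOf (p : ℕ) : ℤ × ℤ := (Denumerable.eqv (ℤ × ℤ)).symm p

/-- The exponent used for the interval covering the `p`-th exceptional point. -/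
noncomputable def Mex (s η ε : ℝ) (p : ℕ) : ℝ :=
  max ((η / 4 * (1 / 2) ^ p) ^ (-1 / s)) (max (-Real.log ε + 1) 1)

/-- Half-length of the `n`-th covering interval. -/
noncomputable def covHalf (c s η ε : ℝ) (N : ℕ) (n : ℕ) : ℝ :=
  if n % 2 = 0 then
    (if (N : ℤ) ≤ |kOf (n / 2)| then Real.exp (-(c * ((|kOf (n / 2)| : ℤ) : ℝ))) else 0)
  else Real.exp (-(Mex s η ε (n / 2))) / 2

/-- Center of the `n`-th covering interval. -/
noncomputable def covCenter (α : ℝ) (n : ℕ) : ℝ :=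
  if n % 2 = 0 then
    (kOf (n / 2) : ℝ) * α + ((⌊-((kOf (n / 2) : ℝ) * α)⌋ : ℤ) : ℝ) + (((n / 2) % 3 : ℕ) : ℝ)
  else ((qOf (n / 2)).1 : ℝ) * α + ((qOf (n / 2)).2 : ℝ)

/-- The value of `ω_s` on the length of a resonance interval with `(N:ℤ) ≤ |k|`. -/
noncomputable def W (c s : ℝ) (N : ℕ) (k : ℤ) : ℝ :=
  if (N : ℤ) ≤ |k| then omegaS s (2 * Real.exp (-(c * ((|k| : ℤ) : ℝ)))) else 0

/-- The total `ω_s`-mass of the resonance intervals at stage `N`. -/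
noncomputable def T (c s : ℝ) (N : ℕ) : ℝ := ∑' k : ℤ, W c s N k

lemma omegaS_two_exp {s t : ℝ} (hs : 1 < s) (ht : 2 ≤ t) :
    0 ≤ omegaS s (2 * Real.exp (-t)) ∧ omegaS s (2 * Real.exp (-t)) ≤ (t / 2) ^ (-s) := by
  have hpos : 0 < 2 * Real.exp (-t) := by positivity
  have hlog : -Real.log (2 * Real.exp (-t)) = t - Real.log 2 := by
    rw [Real.log_mul (by norm_num) (Real.exp_ne_zero _), Real.log_exp]; ring
  have h2 : Real.log 2 ≤ 1 := by
    have := Real.log_two_lt_d9; linarith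
  have hbase : t / 2 ≤ t - Real.log 2 := by linarith
  have hbasepos : (0 : ℝ) < t / 2 := by linarith
  rw [omegaS, if_pos hpos, hlog]
  exact ⟨Real.rpow_nonneg (by linarith) _,
    Real.rpow_le_rpow_of_nonpos hbasepos hbase (by linarith)⟩

lemma W_nonneg {c s : ℝ} {N : ℕ} (hs : 1 < s) (hcN : 2 ≤ c * N) (k : ℤ) :
    0 ≤ W c s N k := by
  unfold W
  split_ifs with h
  · refine (omegaS_two_exp hs ?_).1
    calc (2 : ℝ) ≤ c * N := hcN
      _ ≤ c * ((|k| : ℤ) : ℝ) := by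
          have hc : 0 ≤ c := by nlinarith [Nat.cast_nonneg (α := ℝ) N]
          rcases hc.eq_or_lt with h0 | h0
          · simp [← h0]
          · exact mul_le_mul_of_nonneg_left (by exact_mod_cast h) hc
  · exact le_rfl

lemma W_le {c s : ℝ} {N : ℕ} (hs : 1 < s) (hc : 0 < c) (hcN : 2 ≤ c * N) (k : ℤ) :
    W c s N k ≤ (c / 2) ^ (-s) * |(k : ℝ)| ^ (-s) := by
  have hgb : 0 ≤ (c / 2) ^ (-s) * |(k : ℝ)| ^ (-s) :=
    mul_nonneg (Real.rpow_nonneg (by positivity) _) (Real.rpow_nonneg (abs_nonneg _) _)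
  unfold W
  split_ifs with h
  · have ht : (2 : ℝ) ≤ c * ((|k| : ℤ) : ℝ) := by
      calc (2 : ℝ) ≤ c * N := hcN
        _ ≤ c * ((|k| : ℤ) : ℝ) := by
            exact mul_le_mul_of_nonneg_left (by exact_mod_cast h) hc.le
    refine le_trans (omegaS_two_exp hs ht).2 (le_of_eq ?_)
    have habs : ((|k| : ℤ) : ℝ) = |(k : ℝ)| := by push_cast; ring
    rw [habs, show c * |(k : ℝ)| / 2 = (c / 2) * |(k : ℝ)| by ring,
      Real.mul_rpow (by positivity) (abs_nonneg _)]
  · exact hgb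

lemma summable_gb {c s : ℝ} (hs : 1 < s) (hc : 0 < c) :
    Summable (fun k : ℤ => (c / 2) ^ (-s) * |(k : ℝ)| ^ (-s)) :=
  (Real.summable_abs_int_rpow hs).mul_left _

lemma summable_W {c s : ℝ} {N : ℕ} (hs : 1 < s) (hc : 0 < c) (hcN : 2 ≤ c * N) :
    Summable (W c s N) :=
  Summable.of_nonneg_of_le (W_nonneg hs hcN) (W_le hs hc hcN) (summable_gb hs hc)

lemma tendsto_T {c s : ℝ} (hs : 1 < s) (hc : 0 < c) :
    Tendsto (T c s) atTop (𝓝 0) := by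
  have h0 : Tendsto (fun N => ∑' k : ℤ, W c s N k) atTop (𝓝 (∑' _ : ℤ, (0 : ℝ))) := by
    refine tendsto_tsum_of_dominated_convergence (summable_gb (c := c) hs hc) ?_ ?_
    · intro k
      refine Tendsto.congr' ?_ (tendsto_const_nhds :
        Tendsto (fun _ : ℕ => (0 : ℝ)) atTop (𝓝 0))
      filter_upwards [eventually_ge_atTop (|k|.toNat + 1)] with N hN
      have : ¬ ((N : ℤ) ≤ |k|) := by omega
      simp [W, this]
    · obtain ⟨N₂, hN₂⟩ : ∃ N₂ : ℕ, 2 ≤ c * N₂ := by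
        obtain ⟨N₂, hN₂⟩ := exists_nat_ge (2 / c)
        exact ⟨N₂, by rw [div_le_iff₀ hc, mul_comm] at hN₂; linarith⟩
      filter_upwards [eventually_ge_atTop N₂] with N hN k
      have hcN : 2 ≤ c * N := le_trans hN₂ (by
        have : (N₂ : ℝ) ≤ (N : ℝ) := by exact_mod_cast hN
        nlinarith)
      rw [Real.norm_eq_abs, abs_of_nonneg (W_nonneg hs hcN k)]
      exact W_le hs hc hcN k
  rw [tsum_zero] at h0
  exact h0

lemma distZ_pos {α x : ℝ} (hE : ¬ ∃ k m : ℤ, x = (k : ℝ) * α + (m : ℝ)) (k : ℤ) :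
    0 < distZ (x - (k : ℝ) * α) := by
  rcases (abs_nonneg (x - (k : ℝ) * α - round (x - (k : ℝ) * α))).lt_or_eq with h | h
  · exact h
  · exfalso
    apply hE
    refine ⟨k, round (x - (k : ℝ) * α), ?_⟩
    have := abs_eq_zero.mp h.symm
    have hx : x - (k : ℝ) * α = (round (x - (k : ℝ) * α) : ℝ) := by linarith
    linarith [hx]

/-- Main covering lemma: for any `ε, η > 0` there is a cover of `resSet α δ` by open
intervals of length at most `ε` with total `ω_s`-mass at most `η`. -/
theorem exists_cover (α : ℝ) (hα01 : α ∈ Set.Icc (0 : ℝ) 1)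
    (δ : ℝ≥0∞) (hδ : 0 < δ) (s : ℝ) (hs : 1 < s) (ε η : ℝ) (hε : 0 < ε) (hη : 0 < η) :
    ∃ a b : ℕ → ℝ, (resSet α δ ⊆ ⋃ i, Set.Ioo (a i) (b i)) ∧
      (∀ i, a i ≤ b i ∧ b i - a i ≤ ε) ∧
      ∑' i, ENNReal.ofReal (omegaS s (b i - a i)) ≤ ENNReal.ofReal η := by
  classical
  -- choose `c` with `0 < c` and `ofReal c < δ`
  obtain ⟨c, hc0, hcδ⟩ : ∃ c : ℝ, 0 < c ∧ ENNReal.ofReal c < δ := by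
    rcases eq_or_ne δ ⊤ with rfl | hne
    · exact ⟨1, one_pos, by simp [ENNReal.ofReal_lt_top]⟩
    · have h0 : 0 < δ.toReal := ENNReal.toReal_pos hδ.ne' hne
      refine ⟨δ.toReal / 2, by linarith, ?_⟩
      calc ENNReal.ofReal (δ.toReal / 2) < ENNReal.ofReal δ.toReal := by
            rw [ENNReal.ofReal_lt_ofReal_iff h0]; linarith
        _ = δ := ENNReal.ofReal_toReal hne
  -- choose `N`
  obtain ⟨N, hN1, hN2, hN3, hN4⟩ : ∃ N : ℕ, 1 ≤ N ∧ 2 ≤ c * N ∧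
      2 * Real.exp (-(c * N)) ≤ ε ∧ T c s N ≤ η / 6 := by
    have ev1 : ∀ᶠ N : ℕ in atTop, 1 ≤ N := eventually_ge_atTop 1
    have hcN : Tendsto (fun N : ℕ => c * (N : ℝ)) atTop atTop :=
      (tendsto_natCast_atTop_atTop (R := ℝ)).const_mul_atTop hc0
    have ev2 : ∀ᶠ N : ℕ in atTop, 2 ≤ c * (N : ℝ) := hcN.eventually_ge_atTop 2
    have ev3 : ∀ᶠ N : ℕ in atTop, 2 * Real.exp (-(c * N)) ≤ ε := by
      have : Tendsto (fun N : ℕ => 2 * Real.exp (-(c * N))) atTop (𝓝 (2 * 0)) :=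
        (Real.tendsto_exp_neg_atTop_nhds_zero.comp hcN).const_mul 2
      rw [mul_zero] at this
      exact (this.eventually_lt_const hε).mono fun N h => h.le
    have ev4 : ∀ᶠ N : ℕ in atTop, T c s N ≤ η / 6 :=
      ((tendsto_T hs hc0).eventually_lt_const (by positivity)).mono fun N h => h.le
    obtain ⟨N, h⟩ := (((ev1.and ev2).and ev3).and ev4).exists
    exact ⟨N, h.1.1.1, h.1.1.2, h.1.2, h.2⟩
  set a : ℕ → ℝ := fun n => covCenter α n - covHalf c s η ε N n with ha
  set b : ℕ → ℝ := fun n => covCenter α n + covHalf c s η ε N n with hb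
  have hMge1 : ∀ p, 1 ≤ Mex s η ε p := fun p => le_trans (le_max_right _ _) (le_max_right _ _)
  have hMgelog : ∀ p, -Real.log ε + 1 ≤ Mex s η ε p :=
    fun p => le_trans (le_max_left _ _) (le_max_right _ _)
  have hhalf_nonneg : ∀ n, 0 ≤ covHalf c s η ε N n := by
    intro n
    unfold covHalf
    split_ifs <;> positivity
  have hlen : ∀ n, b n - a n = 2 * covHalf c s η ε N n := fun n => by
    simp only [ha, hb]; ring
  refine ⟨a, b, ?_, ?_, ?_⟩
  · -- coverage
    intro x hx
    obtain ⟨hx01, hres⟩ := hx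
    by_cases hE : ∃ k m : ℤ, x = (k : ℝ) * α + (m : ℝ)
    · -- exceptional point
      obtain ⟨k, m, hkm⟩ := hE
      set p : ℕ := Denumerable.eqv (ℤ × ℤ) (k, m) with hp
      refine Set.mem_iUnion.mpr ⟨2 * p + 1, ?_⟩
      have hmod : ¬ ((2 * p + 1) % 2 = 0) := by omega
      have hdiv : (2 * p + 1) / 2 = p := by omega
      have hq : qOf p = (k, m) := by
        rw [qOf, hp, Equiv.symm_apply_apply]
      have hcen : covCenter α (2 * p + 1) = x := by
        rw [covCenter, if_neg hmod, hdiv, hq, hkm]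
      have hhalf : covHalf c s η ε N (2 * p + 1) = Real.exp (-(Mex s η ε p)) / 2 := by
        rw [covHalf, if_neg hmod, hdiv]
      have hpos : 0 < covHalf c s η ε N (2 * p + 1) := by rw [hhalf]; positivity
      constructor
      · simp only [ha, hcen]; linarith
      · simp only [hb, hcen]; linarith
    · -- resonant point
      have hlim : ENNReal.ofReal c < Filter.limsup
          (fun k : ℤ => ENNReal.ofReal (-Real.log (distZ (x - (k : ℝ) * α)) / |(k : ℝ)|))
          Filter.cofinite := by
        rw [resStrength, if_neg hE] at hres
        rw [hres]; exact hcδ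
      have hfreq := frequently_lt_of_lt_limsup ⟨0, fun a _ => zero_le⟩ hlim
      have hinf : {k : ℤ | ENNReal.ofReal c <
          ENNReal.ofReal (-Real.log (distZ (x - (k : ℝ) * α)) / |(k : ℝ)|)}.Infinite :=
        Filter.frequently_cofinite_iff_infinite.mp hfreq
      obtain ⟨k, hk, hkN⟩ : ∃ k : ℤ, ENNReal.ofReal c <
          ENNReal.ofReal (-Real.log (distZ (x - (k : ℝ) * α)) / |(k : ℝ)|) ∧ (N : ℤ) ≤ |k| := by
        by_contra hcon
        push_neg at hcon
        have hsub : {k : ℤ | ENNReal.ofReal c <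
            ENNReal.ofReal (-Real.log (distZ (x - (k : ℝ) * α)) / |(k : ℝ)|)} ⊆
            Set.Icc (-(N : ℤ)) (N : ℤ) := by
          intro k hk
          obtain ⟨h2a, h2b⟩ := abs_lt.mp (hcon k hk)
          exact ⟨by omega, by omega⟩
        exact hinf ((Set.finite_Icc _ _).subset hsub)
      -- extract the real inequality
      set d : ℝ := distZ (x - (k : ℝ) * α) with hd
      have hd0 : 0 < d := distZ_pos hE k
      have hkabs : (1 : ℝ) ≤ |(k : ℝ)| := by
        have : (1 : ℤ) ≤ |k| := le_trans (by exact_mod_cast hN1) hkN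
        calc (1 : ℝ) = ((1 : ℤ) : ℝ) := by norm_num
          _ ≤ ((|k| : ℤ) : ℝ) := by exact_mod_cast this
          _ = |(k : ℝ)| := by push_cast; ring
      have hclt : c < -Real.log d / |(k : ℝ)| := by
        by_contra hle
        push_neg at hle
        exact absurd (ENNReal.ofReal_le_ofReal hle) (not_le.mpr hk)
      have hckd : c * ((|k| : ℤ) : ℝ) < -Real.log d := by
        have habs : ((|k| : ℤ) : ℝ) = |(k : ℝ)| := by push_cast; ring
        rw [habs]
        have hkpos : (0 : ℝ) < |(k : ℝ)| := by linarith
        calc c * |(k : ℝ)| < (-Real.log d / |(k : ℝ)|) * |(k : ℝ)| := by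
              exact mul_lt_mul_of_pos_right hclt hkpos
          _ = -Real.log d := by field_simp
      set r : ℝ := Real.exp (-(c * ((|k| : ℤ) : ℝ))) with hr
      have hdr : d < r := by
        rw [hr]
        exact (Real.log_lt_iff_lt_exp hd0).mp (by linarith)
      have hckN : 2 ≤ c * ((|k| : ℤ) : ℝ) := by
        calc (2 : ℝ) ≤ c * N := hN2
          _ ≤ c * ((|k| : ℤ) : ℝ) := by
              exact mul_le_mul_of_nonneg_left (by exact_mod_cast hkN) hc0.le
      have hr14 : r ≤ 1 / 4 := by
        have h1 : r ≤ Real.exp (-2) := by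
          rw [hr]; exact Real.exp_le_exp.mpr (by linarith)
        have h2 : Real.exp (-2) ≤ 1 / 4 := by
          rw [Real.exp_neg]
          have he2 : (4 : ℝ) ≤ Real.exp 2 := by
            have h1 : (2 : ℝ) ≤ Real.exp 1 := by
              have := Real.exp_one_gt_d9; linarith
            calc (4 : ℝ) = 2 * 2 := by norm_num
              _ ≤ Real.exp 1 * Real.exp 1 := by nlinarith
              _ = Real.exp 2 := by rw [← Real.exp_add]; norm_num
          rw [inv_le_comm₀ (by positivity) (by norm_num)]
          linarith
        linarith
      -- locate the interval
      set y : ℝ := x - (k : ℝ) * α with hy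
      set n₀ : ℤ := round y with hn₀
      set m₀ : ℤ := ⌊-((k : ℝ) * α)⌋ with hm₀
      have hm₀le : (m₀ : ℝ) ≤ -((k : ℝ) * α) := Int.floor_le _
      have hm₀lt : -((k : ℝ) * α) < (m₀ : ℝ) + 1 := Int.lt_floor_add_one _
      have habsy : |y - (n₀ : ℝ)| < r := hdr
      obtain ⟨hyl2, hyl1⟩ := abs_lt.mp habsy
      have hx0 : (0 : ℝ) ≤ x := hx01.1
      have hx1 : x ≤ 1 := hx01.2
      have hn₀ge : m₀ ≤ n₀ := by
        have hreal : ((m₀ - 1 : ℤ) : ℝ) < ((n₀ : ℤ) : ℝ) := by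
          push_cast
          have h2 : y ≥ -((k : ℝ) * α) := by rw [hy]; linarith
          linarith
        have : (m₀ - 1 : ℤ) < n₀ := by exact_mod_cast hreal
        omega
      have hn₀le : n₀ ≤ m₀ + 2 := by
        have hreal : ((n₀ : ℤ) : ℝ) < ((m₀ + 3 : ℤ) : ℝ) := by
          push_cast
          have h2 : y ≤ 1 + -((k : ℝ) * α) := by rw [hy]; linarith
          linarith
        have : n₀ < m₀ + 3 := by exact_mod_cast hreal
        omega
      set j : ℕ := (n₀ - m₀).toNat with hj
      have hj3 : j < 3 := by omega
      have hjcast : (j : ℤ) = n₀ - m₀ := Int.toNat_of_nonneg (by omega)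
      set p : ℕ := 3 * (Denumerable.eqv ℤ k) + j with hp
      refine Set.mem_iUnion.mpr ⟨2 * p, ?_⟩
      have hmod : (2 * p) % 2 = 0 := by omega
      have hdiv : (2 * p) / 2 = p := by omega
      have hkOf : kOf p = k := by
        rw [kOf, hp, show (3 * (Denumerable.eqv ℤ k) + j) / 3 = Denumerable.eqv ℤ k by omega,
          Equiv.symm_apply_apply]
      have hpmod : p % 3 = j := by omega
      have hcen : covCenter α (2 * p) = (k : ℝ) * α + (n₀ : ℝ) := by
        rw [covCenter, if_pos hmod, hdiv, hkOf, ← hm₀, hpmod]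
        have : (m₀ : ℝ) + (j : ℝ) = (n₀ : ℝ) := by
          have : ((m₀ + (j : ℤ) : ℤ) : ℝ) = ((n₀ : ℤ) : ℝ) := by
            rw [hjcast]; norm_num
          push_cast at this ⊢
          linarith
        linarith
      have hhalf : covHalf c s η ε N (2 * p) = r := by
        rw [covHalf, if_pos hmod, hdiv, hkOf, if_pos hkN]
      constructor
      · simp only [ha, hcen, hhalf]
        linarith [hy, hyl1, hyl2]
      · simp only [hb, hcen, hhalf]
        linarith [hy, hyl1, hyl2]
  · -- lengths
    intro n
    constructor
    · have := hhalf_nonneg n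
      simp only [ha, hb]
      linarith
    · rw [hlen]
      unfold covHalf
      split_ifs with h1 h2
      · have hk : (N : ℝ) ≤ ((|kOf (n / 2)| : ℤ) : ℝ) := by exact_mod_cast h2
        calc 2 * Real.exp (-(c * ((|kOf (n / 2)| : ℤ) : ℝ))) ≤ 2 * Real.exp (-(c * N)) := by
              have : c * (N : ℝ) ≤ c * ((|kOf (n / 2)| : ℤ) : ℝ) :=
                mul_le_mul_of_nonneg_left hk hc0.le
              have := Real.exp_le_exp.mpr (by linarith : -(c * ((|kOf (n / 2)| : ℤ) : ℝ)) ≤ -(c * (N : ℝ)))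
              linarith
          _ ≤ ε := hN3
      · simpa using hε.le
      · rw [show 2 * (Real.exp (-(Mex s η ε (n / 2))) / 2) = Real.exp (-(Mex s η ε (n / 2))) by ring]
        calc Real.exp (-(Mex s η ε (n / 2))) ≤ Real.exp (Real.log ε) := by
              apply Real.exp_le_exp.mpr
              have := hMgelog (n / 2)
              linarith
          _ = ε := Real.exp_log hε
  · -- the sum
    have hFe : ∀ p : ℕ, ENNReal.ofReal (omegaS s (b (2 * p) - a (2 * p))) =
        ENNReal.ofReal (W c s N (kOf p)) := by
      intro p
      rw [hlen]
      have hmod : (2 * p) % 2 = 0 := by omega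
      have hdiv : (2 * p) / 2 = p := by omega
      rw [covHalf, if_pos hmod, hdiv, W]
      split_ifs with h
      · rfl
      · norm_num [omegaS]
    have hFo : ∀ p : ℕ, ENNReal.ofReal (omegaS s (b (2 * p + 1) - a (2 * p + 1))) =
        ENNReal.ofReal ((Mex s η ε p) ^ (-s)) := by
      intro p
      rw [hlen]
      have hmod : ¬ ((2 * p + 1) % 2 = 0) := by omega
      have hdiv : (2 * p + 1) / 2 = p := by omega
      rw [covHalf, if_neg hmod, hdiv,
        show 2 * (Real.exp (-(Mex s η ε p)) / 2) = Real.exp (-(Mex s η ε p)) by ring,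
        omegaS, if_pos (Real.exp_pos _), Real.log_exp, neg_neg]
    have heven : (∑' p : ℕ, ENNReal.ofReal (omegaS s (b (2 * p) - a (2 * p)))) ≤
        ENNReal.ofReal (η / 2) := by
      have hW0 := W_nonneg (c := c) (N := N) hs hN2
      have hWsum := summable_W (c := c) (N := N) hs hc0 hN2
      calc ∑' p : ℕ, ENNReal.ofReal (omegaS s (b (2 * p) - a (2 * p)))
          = ∑' p : ℕ, ENNReal.ofReal (W c s N (((Denumerable.eqv ℤ).symm) (p / 3))) := by
            exact tsum_congr fun p => by rw [hFe p]; rfl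
        _ = ∑' x : ℕ × Fin 3, ENNReal.ofReal (W c s N (((Denumerable.eqv ℤ).symm) x.1)) := by
            rw [← Equiv.tsum_eq (Nat.divModEquiv 3)
              (fun x : ℕ × Fin 3 => ENNReal.ofReal (W c s N (((Denumerable.eqv ℤ).symm) x.1)))]
            rfl
        _ = ∑' q : ℕ, ∑' _ : Fin 3, ENNReal.ofReal (W c s N (((Denumerable.eqv ℤ).symm) q)) :=
            ENNReal.tsum_prod'
        _ = ∑' q : ℕ, (3 : ℝ≥0∞) * ENNReal.ofReal (W c s N (((Denumerable.eqv ℤ).symm) q)) := by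
            refine tsum_congr fun q => ?_
            rw [tsum_fintype]
            simp [Finset.sum_const, Finset.card_univ, nsmul_eq_mul]
        _ = (3 : ℝ≥0∞) * ∑' q : ℕ, ENNReal.ofReal (W c s N (((Denumerable.eqv ℤ).symm) q)) :=
            ENNReal.tsum_mul_left
        _ = (3 : ℝ≥0∞) * ∑' k : ℤ, ENNReal.ofReal (W c s N k) := by
            rw [Equiv.tsum_eq (Denumerable.eqv ℤ).symm (fun k => ENNReal.ofReal (W c s N k))]
        _ = (3 : ℝ≥0∞) * ENNReal.ofReal (T c s N) := by
            rw [T, ENNReal.ofReal_tsum_of_nonneg hW0 hWsum]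
        _ ≤ (3 : ℝ≥0∞) * ENNReal.ofReal (η / 6) := by
            exact mul_le_mul_right (ENNReal.ofReal_le_ofReal hN4) _
        _ = ENNReal.ofReal (η / 2) := by
            rw [show (3 : ℝ≥0∞) = ENNReal.ofReal 3 by norm_num,
              ← ENNReal.ofReal_mul (by norm_num), show (3 : ℝ) * (η / 6) = η / 2 by ring]
    have hodd : (∑' p : ℕ, ENNReal.ofReal (omegaS s (b (2 * p + 1) - a (2 * p + 1)))) ≤
        ENNReal.ofReal (η / 2) := by
      have hpt : ∀ p : ℕ, (Mex s η ε p) ^ (-s) ≤ η / 4 * (1 / 2 : ℝ) ^ p := by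
        intro p
        set B : ℝ := η / 4 * (1 / 2 : ℝ) ^ p with hB
        have hBpos : 0 < B := by rw [hB]; positivity
        have hBM : B ^ (-1 / s) ≤ Mex s η ε p := le_max_left _ _
        have hBrpos : 0 < B ^ (-1 / s) := Real.rpow_pos_of_pos hBpos _
        calc (Mex s η ε p) ^ (-s) ≤ (B ^ (-1 / s)) ^ (-s) :=
              Real.rpow_le_rpow_of_nonpos hBrpos hBM (by linarith)
          _ = B := by
              have hs0 : s ≠ 0 := by positivity
              rw [← Real.rpow_mul hBpos.le, show -1 / s * -s = 1 by field_simp,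
                Real.rpow_one]
      have hsumgeo : Summable (fun p : ℕ => η / 4 * (1 / 2 : ℝ) ^ p) :=
        (summable_geometric_of_lt_one (by norm_num) (by norm_num)).mul_left _
      calc ∑' p : ℕ, ENNReal.ofReal (omegaS s (b (2 * p + 1) - a (2 * p + 1)))
          = ∑' p : ℕ, ENNReal.ofReal ((Mex s η ε p) ^ (-s)) := tsum_congr fun p => hFo p
        _ ≤ ∑' p : ℕ, ENNReal.ofReal (η / 4 * (1 / 2 : ℝ) ^ p) :=
            ENNReal.tsum_le_tsum fun p => ENNReal.ofReal_le_ofReal (hpt p)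
        _ = ENNReal.ofReal (∑' p : ℕ, η / 4 * (1 / 2 : ℝ) ^ p) :=
            (ENNReal.ofReal_tsum_of_nonneg (fun p => by positivity) hsumgeo).symm
        _ = ENNReal.ofReal (η / 2) := by
            rw [tsum_mul_left, tsum_geometric_of_lt_one (by norm_num) (by norm_num)]
            norm_num
            congr 1
            ring
    calc ∑' i : ℕ, ENNReal.ofReal (omegaS s (b i - a i))
        = (∑' p : ℕ, ENNReal.ofReal (omegaS s (b (2 * p) - a (2 * p)))) +
          ∑' p : ℕ, ENNReal.ofReal (omegaS s (b (2 * p + 1) - a (2 * p + 1))) :=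
          (tsum_even_add_odd ENNReal.summable ENNReal.summable).symm
      _ ≤ ENNReal.ofReal (η / 2) + ENNReal.ofReal (η / 2) := add_le_add heven hodd
      _ = ENNReal.ofReal η := by
          rw [← ENNReal.ofReal_add (by positivity) (by positivity)]
          norm_num

end ResCover

/-- For irrational `α ∈ [0,1]` and `0 < δ ≤ ∞`, the `ω_s`-Hausdorff measure of `D(δ)`
vanishes for every `s > 1`. -/
theorem hausdorff_omegaS_resSet_eq_zero (α : ℝ) (hα : Irrational α)
    (hα01 : α ∈ Set.Icc (0 : ℝ) 1) (δ : ℝ≥0∞) (hδ : 0 < δ)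
    (s : ℝ) (hs : 1 < s) :
    gaugeHaus (omegaS s) (resSet α δ) = 0 := by
  rw [gaugeHaus, ENNReal.iSup_eq_zero]
  intro ε
  rw [ENNReal.iSup_eq_zero]
  intro hε
  refine le_antisymm ?_ zero_le
  refine ENNReal.le_of_forall_pos_le_add fun r hr _ => ?_
  rw [zero_add]
  obtain ⟨a, b, hcov, hlen, hsum⟩ :=
    ResCover.exists_cover α hα01 δ hδ s hs ε r hε (by exact_mod_cast hr)
  refine le_trans (iInf_le_of_le a (iInf_le_of_le b (iInf_le_of_le hcov
    (iInf_le_of_le hlen le_rfl)))) ?_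
  exact le_trans hsum (le_of_eq ENNReal.ofReal_coe_nnreal)
end

section
/- Let α ∈ [0,1] be irrational and let 0 < η < ∞. Define B(η) = {x ∈ [0,1] : ‖x − kα‖_{ℝ/ℤ} < e^{−|k|η} for infinitely many k ∈ ℤ}. Then for every s > 1, the ω_s-Hausdorff measure of B(η) vanishes: ℋ^{ω_s}(B(η)) = 0. -/
set_option maxHeartbeats 1000000

open Filter MeasureTheory Set
open scoped ENNReal NNReal Classical Topology

def Kmap (m : ℕ) : ℤ := if Even m then ((m / 2 : ℕ) : ℤ) else -(((m + 1) / 2 : ℕ) : ℤ)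

lemma Kmap_surj (k : ℤ) : ∃ m : ℕ, Kmap m = k := by
  rcases le_or_gt 0 k with h | h
  · refine ⟨2 * k.toNat, ?_⟩
    have he : Even (2 * k.toNat) := even_two_mul _
    simp only [Kmap, if_pos he, Nat.mul_div_cancel_left _ (by norm_num : 0 < 2)]
    omega
  · refine ⟨2 * (-k).toNat - 1, ?_⟩
    have ht : 1 ≤ (-k).toNat := by omega
    have he : ¬ Even (2 * (-k).toNat - 1) := by rw [Nat.even_iff]; omega
    have h2 : (2 * (-k).toNat - 1 + 1) / 2 = (-k).toNat := by omega
    simp only [Kmap, if_neg he, h2]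
    omega

lemma Kmap_natAbs_le (m : ℕ) : (Kmap m).natAbs ≤ m := by
  unfold Kmap
  split_ifs with h
  · simp only [Int.natAbs_natCast]; omega
  · rw [Nat.even_iff] at h
    simp only [Int.natAbs_neg, Int.natAbs_natCast]; omega

lemma le_two_mul_Kmap_natAbs (m : ℕ) : m ≤ 2 * (Kmap m).natAbs + 1 := by
  unfold Kmap
  split_ifs with h
  · simp only [Int.natAbs_natCast]; omega
  · simp only [Int.natAbs_neg, Int.natAbs_natCast]; omega

/-- For irrational `α ∈ [0,1]` and `0 < η < ∞`, the set
`B(η) = {x ∈ [0,1] : ‖x - kα‖_{ℝ/ℤ} < e^{-|k|η} for infinitely many k ∈ ℤ}`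
has vanishing `ω_s`-Hausdorff measure for every `s > 1`. -/
theorem hausdorff_omegaS_limsupSet_eq_zero (α : ℝ) (hα : Irrational α)
    (hα01 : α ∈ Set.Icc (0 : ℝ) 1) (η : ℝ) (hη : 0 < η)
    (s : ℝ) (hs : 1 < s) :
    gaugeHaus (omegaS s)
      {x ∈ Set.Icc (0 : ℝ) 1 |
        {k : ℤ | distZ (x - (k : ℝ) * α) < Real.exp (-(|(k : ℝ)| * η))}.Infinite} = 0 := by
  rw [gaugeHaus]
  refine le_antisymm (iSup_le fun ε => iSup_le fun hε => ?_) zero_le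
  -- the dominating summable sequence
  set g : ℕ → ℝ≥0∞ := fun m => ENNReal.ofReal ((η/8) ^ (-s)) * ENNReal.ofReal ((m:ℝ) ^ (-s))
    with hg_def
  have hgsum : ∑' m, g m ≠ ∞ := by
    rw [hg_def, ENNReal.tsum_mul_left]
    refine ENNReal.mul_ne_top ENNReal.ofReal_ne_top ?_
    rw [← ENNReal.ofReal_tsum_of_nonneg (fun n => Real.rpow_nonneg (Nat.cast_nonneg n) _)
      (Real.summable_nat_rpow.mpr (by linarith))]
    exact ENNReal.ofReal_ne_top
  have htend : Tendsto (fun N : ℕ => 3 * ∑' j, g (j + N)) atTop (𝓝 0) := by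
    have h0 := ENNReal.tendsto_sum_nat_add g hgsum
    have := ENNReal.Tendsto.const_mul (a := 3) h0 (Or.inr (by norm_num))
    simpa using this
  refine ge_of_tendsto htend ?_
  have hexp : Tendsto (fun N : ℕ => Real.exp (-((N:ℝ) * η))) atTop (𝓝 0) := by
    apply Real.tendsto_exp_atBot.comp
    exact tendsto_neg_atTop_atBot.comp (tendsto_natCast_atTop_atTop.atTop_mul_const hη)
  have hNη : Tendsto (fun N : ℕ => 3/8 * (N:ℝ) * η) atTop atTop :=
    (tendsto_natCast_atTop_atTop.const_mul_atTop (by norm_num : (0:ℝ) < 3/8)).atTop_mul_const hη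
  filter_upwards [hexp.eventually_le_const (half_pos hε),
      hexp.eventually_lt_const (by norm_num : (0:ℝ) < 1/2),
      hNη.eventually_ge_atTop (η/2 + Real.log 2),
      eventually_ge_atTop 1] with N hεN h12 hlogN hN1
  -- the radii
  set r : ℤ → ℝ := fun k => Real.exp (-(|(k:ℝ)| * η)) with hr_def
  have hrpos : ∀ k, 0 < r k := fun k => Real.exp_pos _
  have hrle : ∀ k : ℤ, (N:ℤ) ≤ |k| → r k ≤ Real.exp (-((N:ℝ) * η)) := by
    intro k hk
    apply Real.exp_le_exp.mpr
    have h1 : (N:ℝ) ≤ |(k:ℝ)| := by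
      have : ((N:ℤ):ℝ) ≤ ((|k|:ℤ):ℝ) := by exact_mod_cast hk
      push_cast at this; exact this
    nlinarith
  -- the cover
  set A : ℕ → ℝ := fun n => if (N:ℤ) ≤ |Kmap (n/3)| then
      Int.fract ((Kmap (n/3) : ℝ) * α) + ((n % 3 : ℕ) : ℝ) - 1 - r (Kmap (n/3)) else 0 with hA
  set B : ℕ → ℝ := fun n => if (N:ℤ) ≤ |Kmap (n/3)| then
      Int.fract ((Kmap (n/3) : ℝ) * α) + ((n % 3 : ℕ) : ℝ) - 1 + r (Kmap (n/3)) else 0 with hB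
  have hcov : {x ∈ Set.Icc (0 : ℝ) 1 |
      {k : ℤ | distZ (x - (k : ℝ) * α) < Real.exp (-(|(k : ℝ)| * η))}.Infinite}
      ⊆ ⋃ i, Set.Ioo (A i) (B i) := by
    intro x hx
    obtain ⟨hx01, hxinf⟩ := hx
    obtain ⟨hx0, hx1⟩ := hx01
    obtain ⟨k, hkmem, hkN⟩ : ∃ k : ℤ, distZ (x - (k:ℝ) * α) < r k ∧ (N:ℤ) ≤ |k| := by
      by_contra hcon
      push_neg at hcon
      apply hxinf
      apply Set.Finite.subset (Set.finite_Icc (-(N:ℤ)) N)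
      intro k hk
      have h2 := hcon k hk
      have h3 := abs_lt.mp h2
      simp only [Set.mem_Icc]
      omega
    obtain ⟨m, hm⟩ := Kmap_surj k
    set c : ℝ := Int.fract ((k:ℝ) * α) with hc
    set d : ℤ := round (x - (k:ℝ)*α) + ⌊(k:ℝ)*α⌋ with hd
    have hxd : |x - c - (d:ℝ)| < r k := by
      have heq : x - (k:ℝ)*α - round (x - (k:ℝ)*α) = x - c - (d:ℝ) := by
        rw [hc, hd, Int.fract]
        push_cast
        ring
      rw [distZ, heq] at hkmem
      exact hkmem
    have hrN := hrle k hkN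
    have hr2 : r k < 1/2 := lt_of_le_of_lt hrN h12
    have hc0 : 0 ≤ c := Int.fract_nonneg _
    have hc1 : c < 1 := Int.fract_lt_one _
    have habs := abs_lt.mp hxd
    have hd1 : d < 2 := by
      have : (d:ℝ) < 2 := by linarith [habs.1, habs.2]
      exact_mod_cast this
    have hd2 : -2 < d := by
      have : (-2 : ℝ) < (d:ℝ) := by linarith [habs.1, habs.2]
      exact_mod_cast this
    set j : ℕ := (d + 1).toNat with hj
    have hj3 : j < 3 := by omega
    have hjd : (j:ℤ) = d + 1 := by omega
    refine Set.mem_iUnion.mpr ⟨3 * m + j, ?_⟩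
    have hdiv : (3 * m + j) / 3 = m := by omega
    have hmod : (3 * m + j) % 3 = j := by omega
    have hjr : ((j:ℕ):ℝ) - 1 = (d:ℝ) := by
      have : ((j:ℤ):ℝ) = ((d + 1 : ℤ) : ℝ) := by exact_mod_cast congrArg (fun t : ℤ => (t:ℝ)) hjd
      push_cast at this
      linarith
    simp only [hA, hB, hdiv, hmod, hm, if_pos hkN, Set.mem_Ioo]
    constructor <;> linarith [habs.1, habs.2]
  have hlen : ∀ i, A i ≤ B i ∧ B i - A i ≤ ε := by
    intro n
    by_cases h : (N:ℤ) ≤ |Kmap (n/3)|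
    · simp only [hA, hB, if_pos h]
      have h1 := hrpos (Kmap (n/3))
      have h2 := hrle _ h
      exact ⟨by linarith, by linarith⟩
    · simp only [hA, hB, if_neg h]
      exact ⟨le_rfl, by linarith⟩
  -- now bound the sum
  set F : ℕ → ℝ≥0∞ := fun m => if N ≤ m then g m else 0 with hF
  have step1 : ∀ n, ENNReal.ofReal (omegaS s (B n - A n)) ≤ F (n / 3) := by
    intro n
    by_cases h : (N:ℤ) ≤ |Kmap (n/3)|
    · have hNm : N ≤ n / 3 := by
        have h1 : (N:ℤ) ≤ ((Kmap (n/3)).natAbs : ℤ) := by rwa [Int.abs_eq_natAbs] at h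
        have h2 : N ≤ (Kmap (n/3)).natAbs := by exact_mod_cast h1
        exact le_trans h2 (Kmap_natAbs_le _)
      have hFm : F (n/3) = g (n/3) := if_pos hNm
      simp only [hA, hB, if_pos h]
      rw [show (Int.fract ((Kmap (n/3):ℝ) * α) + ((n % 3 : ℕ) : ℝ) - 1 + r (Kmap (n/3))) -
          (Int.fract ((Kmap (n/3):ℝ) * α) + ((n % 3 : ℕ) : ℝ) - 1 - r (Kmap (n/3)))
          = 2 * r (Kmap (n/3)) by ring]
      have h2r : (0:ℝ) < 2 * r (Kmap (n/3)) := by positivity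
      rw [omegaS, if_pos h2r]
      have hlog : Real.log (2 * r (Kmap (n/3))) = Real.log 2 - |((Kmap (n/3)):ℝ)| * η := by
        rw [Real.log_mul (by norm_num) (ne_of_gt (hrpos _)), hr_def, Real.log_exp]
        ring
      rw [hlog, neg_sub]
      have hkabs : (((Kmap (n/3)).natAbs : ℕ) : ℝ) = |((Kmap (n/3)):ℝ)| := by
        rw [Nat.cast_natAbs, Int.cast_abs]
      have hmk : ((n/3 : ℕ):ℝ) ≤ 2 * |((Kmap (n/3)):ℝ)| + 1 := by
        have h1 := le_two_mul_Kmap_natAbs (n/3)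
        have h2 : ((n/3 : ℕ):ℝ) ≤ 2 * (((Kmap (n/3)).natAbs : ℕ) : ℝ) + 1 := by exact_mod_cast h1
        rwa [hkabs] at h2
      have hNmR : η/2 + Real.log 2 ≤ 3/8 * ((n/3 : ℕ):ℝ) * η := by
        have h1 : (N:ℝ) ≤ ((n/3 : ℕ):ℝ) := by exact_mod_cast hNm
        nlinarith
      have hb : η * ((n/3 : ℕ):ℝ) / 8 ≤ |((Kmap (n/3)):ℝ)| * η - Real.log 2 := by
        have h1 := mul_le_mul_of_nonneg_right hmk hη.le
        linarith
      have hm1 : (1:ℝ) ≤ ((n/3 : ℕ):ℝ) := by exact_mod_cast le_trans hN1 hNm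
      have hbpos : 0 < η * ((n/3 : ℕ):ℝ) / 8 := by nlinarith
      have hrpowle : (|((Kmap (n/3)):ℝ)| * η - Real.log 2) ^ (-s)
          ≤ (η * ((n/3 : ℕ):ℝ) / 8) ^ (-s) :=
        Real.rpow_le_rpow_of_nonpos hbpos hb (by linarith)
      refine le_trans (ENNReal.ofReal_le_ofReal hrpowle) ?_
      rw [hFm]
      simp only [hg_def]
      rw [← ENNReal.ofReal_mul (Real.rpow_nonneg (by positivity) _),
        ← Real.mul_rpow (by positivity) (Nat.cast_nonneg _),
        show η/8 * ((n/3 : ℕ):ℝ) = η * ((n/3 : ℕ):ℝ) / 8 by ring]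
    · simp only [hA, hB, if_neg h, sub_zero]
      simp [omegaS]
  have hsum : ∑' i, ENNReal.ofReal (omegaS s (B i - A i)) ≤ 3 * ∑' j, g (j + N) := by
    refine le_trans (ENNReal.tsum_le_tsum step1) ?_
    have hinj : Function.Injective
        (fun n : ℕ => ((n / 3, ⟨n % 3, Nat.mod_lt _ (by norm_num)⟩) : ℕ × Fin 3)) := by
      intro a b hab
      simp only [Prod.mk.injEq, Fin.mk.injEq] at hab
      omega
    calc ∑' n, F (n / 3)
        ≤ ∑' p : ℕ × Fin 3, F p.1 :=
          ENNReal.tsum_comp_le_tsum_of_injective hinj (fun p => F p.1)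
      _ = ∑' (m : ℕ), ∑' (_ : Fin 3), F m := ENNReal.tsum_prod (f := fun m (_ : Fin 3) => F m)
      _ = ∑' (m : ℕ), 3 * F m := by
          refine tsum_congr fun m => ?_
          rw [tsum_fintype, Finset.sum_const, Finset.card_univ, Fintype.card_fin,
            nsmul_eq_mul, Nat.cast_ofNat]
      _ = 3 * ∑' m, F m := ENNReal.tsum_mul_left
      _ = 3 * ∑' j, g (j + N) := by
          have hinj2 : Function.Injective (fun j : ℕ => j + N) := fun a b h => by simpa using h
          have hsupp : Function.support F ⊆ Set.range (fun j : ℕ => j + N) := by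
            intro m hm
            simp only [hF, Function.mem_support, ne_eq, ite_eq_right_iff, not_forall] at hm
            obtain ⟨h1, -⟩ := hm
            exact ⟨m - N, by simp; omega⟩
          congr 1
          rw [← hinj2.tsum_eq hsupp]
          exact tsum_congr fun j => by simp only [hF]; exact if_pos (by omega)
  exact le_trans (iInf_le_of_le A <| iInf_le_of_le B <| iInf_le_of_le hcov <| iInf_le _ hlen) hsum
end

section
/- Let α be irrational with continued fraction convergent denominators (q_n), let δ > 0, and let I be an interval in ℝ/ℤ with Lebesgue measure |I| > 0. Then for all sufficiently large integers k there exists a finite set 𝒟 of natural numbers with 𝒟 ⊆ {n : q_k/2 ≤ n < q_k and nα mod 1 ∈ I} such that: (i) (1/8)·|I|·q_k ≤ #𝒟 ≤ |I|·q_k; and (ii) for every n ∈ 𝒟, the closed ball B(nα, e^{−nδ}) in ℝ/ℤ is contained in I. -/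
open Filter MeasureTheory Set
open scoped ENNReal NNReal Classical

theorem Real.fact_zero_lt_one : Fact ((0 : ℝ) < 1) := ⟨zero_lt_one⟩

attribute [local instance] Real.fact_zero_lt_one

/-- `qden α n` is the denominator `q_n` of the `n`-th convergent of the continued
fraction expansion of `α`. -/
noncomputable def qden (α : ℝ) (n : ℕ) : ℝ := (GenContFract.of α).dens n

namespace ResonantAux

open GenContFract

lemma not_terminatedAt {α : ℝ} (hα : Irrational α) (n : ℕ) :
    ¬(GenContFract.of α).TerminatedAt n := by
  intro h
  obtain ⟨q, hq⟩ := (GenContFract.terminates_iff_rat α).1 ⟨n, h⟩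
  exact hα ⟨q, hq.symm⟩

lemma exists_s {α : ℝ} (hα : Irrational α) (n : ℕ) :
    ∃ gp, (GenContFract.of α).s.get? n = some gp :=
  Option.ne_none_iff_exists'.1 (not_terminatedAt hα n)

lemma partb_int {α : ℝ} (hα : Irrational α) (n : ℕ) {gp : GenContFract.Pair ℝ}
    (h : (GenContFract.of α).s.get? n = some gp) :
    gp.a = 1 ∧ ∃ z : ℤ, gp.b = (z : ℝ) := by
  exact ⟨of_partNum_eq_one (partNum_eq_s_a h),
    exists_int_eq_of_partDen (partDen_eq_s_b h)⟩

lemma int_pair {α : ℝ} (hα : Irrational α) (n : ℕ) :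
    (∃ p : ℤ, (GenContFract.of α).nums n = (p : ℝ)) ∧
    (∃ q : ℤ, (GenContFract.of α).dens n = (q : ℝ)) := by
  induction n using Nat.strong_induction_on with
  | _ n ih =>
  match n with
  | 0 => exact ⟨⟨⌊α⌋, by rw [zeroth_num_eq_h, of_h_eq_floor]⟩, ⟨1, by simp⟩⟩
  | 1 =>
    obtain ⟨gp, hgp⟩ := exists_s hα 0
    obtain ⟨ha, z, hz⟩ := partb_int hα 0 hgp
    constructor
    · exact ⟨z * ⌊α⌋ + 1, by rw [first_num_eq hgp, of_h_eq_floor, ha, hz]; push_cast; ring⟩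
    · exact ⟨z, by rw [first_den_eq hgp, hz]⟩
  | (n + 2) =>
    obtain ⟨gp, hgp⟩ := exists_s hα (n + 1)
    obtain ⟨ha, z, hz⟩ := partb_int hα (n + 1) hgp
    obtain ⟨⟨p0, hp0⟩, ⟨q0, hq0⟩⟩ := ih n (by omega)
    obtain ⟨⟨p1, hp1⟩, ⟨q1, hq1⟩⟩ := ih (n + 1) (by omega)
    constructor
    · exact ⟨z * p1 + p0, by
        rw [nums_recurrence hgp hp0 hp1, ha, hz]; push_cast; ring⟩
    · exact ⟨z * q1 + q0, by
        rw [dens_recurrence hgp hq0 hq1, ha, hz]; push_cast; ring⟩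

lemma den_pos {α : ℝ} (hα : Irrational α) (n : ℕ) :
    (1 : ℝ) ≤ (GenContFract.of α).dens n := by
  have h := succ_nth_fib_le_of_nth_den (v := α) (n := n)
    (Or.inr (not_terminatedAt hα (n - 1)))
  have : (1 : ℕ) ≤ Nat.fib (n + 1) := Nat.fib_pos.2 (by omega)
  calc (1:ℝ) ≤ (Nat.fib (n+1) : ℝ) := by exact_mod_cast this
    _ ≤ _ := h

lemma cf_data {α : ℝ} (hα : Irrational α) (k : ℕ) :
    ∃ (p : ℤ) (q : ℕ), 0 < q ∧ ((q : ℝ) = qden α k) ∧ IsCoprime p (q : ℤ) ∧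
      |α - (p : ℝ) / (q : ℝ)| ≤ 1 / (q : ℝ) ^ 2 := by
  obtain ⟨⟨p, hp⟩, ⟨qz, hqz⟩⟩ := int_pair hα k
  obtain ⟨⟨p1, hp1⟩, ⟨q1, hq1⟩⟩ := int_pair hα (k + 1)
  have hq1' : (1:ℝ) ≤ qz := by rw [← hqz]; exact den_pos hα k
  have hqzpos : 0 < qz := by exact_mod_cast lt_of_lt_of_le zero_lt_one hq1'
  have hcast : ((qz.toNat : ℕ) : ℝ) = (qz : ℝ) := by
    exact_mod_cast congrArg (Int.cast : ℤ → ℝ) (Int.toNat_of_nonneg hqzpos.le)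
  refine ⟨p, qz.toNat, by omega, ?_, ?_, ?_⟩
  · rw [hcast, qden, hqz]
  · -- coprimality via determinant
    have hdet : (GenContFract.of α).nums k * (GenContFract.of α).dens (k+1) -
        (GenContFract.of α).dens k * (GenContFract.of α).nums (k+1) = (-1:ℝ) ^ (k+1) := by
      exact (SimpContFract.of α).determinant (not_terminatedAt hα k)
    rw [hp, hq1, hqz, hp1] at hdet
    have hdetz : p * q1 - qz * p1 = (-1 : ℤ) ^ (k+1) := by
      have := hdet
      exact_mod_cast this
    set ε : ℤ := (-1) ^ (k+1) with hε
    have hε2 : ε * ε = 1 := by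
      rw [hε, ← pow_add]
      have : Even ((k+1) + (k+1)) := by exact ⟨k+1, by ring⟩
      exact this.neg_one_pow
    refine ⟨ε * q1, -(ε * p1), ?_⟩
    rw [Int.toNat_of_nonneg hqzpos.le]
    calc ε * q1 * p + -(ε * p1) * qz = ε * (p * q1 - qz * p1) := by ring
      _ = ε * ε := by rw [hdetz]
      _ = 1 := hε2
  · rw [hcast]
    have habs := abs_sub_convs_le (not_terminatedAt hα k) (v := α)
    rw [conv_eq_num_div_den, hp, hqz] at habs
    have hmono : (GenContFract.of α).dens k ≤ (GenContFract.of α).dens (k+1) := of_den_mono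
    rw [hqz] at hmono
    have hq1pos : (0:ℝ) < qz := by exact_mod_cast hqzpos
    calc |α - (p:ℝ)/(qz:ℝ)| ≤ 1 / ((qz:ℝ) * (GenContFract.of α).dens (k+1)) := habs
      _ ≤ 1 / ((qz:ℝ) ^ 2) := by
          apply one_div_le_one_div_of_le (by positivity)
          rw [pow_two]
          exact mul_le_mul_of_nonneg_left hmono hq1pos.le

lemma qden_ge {α : ℝ} (hα : Irrational α) (R : ℝ) :
    ∃ K : ℕ, ∀ k : ℕ, K ≤ k → R ≤ qden α k := by
  obtain ⟨n₀, hn₀⟩ := exists_nat_ge R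
  refine ⟨n₀ + 5, fun k hk => ?_⟩
  have h1 := succ_nth_fib_le_of_nth_den (v := α) (n := k) (Or.inr (not_terminatedAt hα (k-1)))
  have h2 : k + 1 ≤ Nat.fib (k + 1) := Nat.le_fib_self (by omega)
  have h3 : (n₀ : ℝ) ≤ Nat.fib (k+1) := by exact_mod_cast le_trans (by omega) h2
  calc R ≤ (n₀:ℝ) := hn₀
    _ ≤ (Nat.fib (k+1) : ℝ) := h3
    _ ≤ qden α k := h1

lemma exists_inv_mod (q : ℕ) (hq : 0 < q) (p : ℤ) (hco : IsCoprime p (q : ℤ)) (t : ℤ) :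
    ∃ m : ℕ, m < q ∧ ∃ w : ℤ, (m : ℤ) * p = t + w * q := by
  haveI : NeZero q := ⟨hq.ne'⟩
  obtain ⟨u, v, huv⟩ := hco
  -- (p : ZMod q) is a unit
  have hunit : IsUnit (p : ZMod q) := by
    refine IsUnit.of_mul_eq_one ((u : ℤ) : ZMod q) ?_
    have : ((u * p + v * q : ℤ) : ZMod q) = ((1 : ℤ) : ZMod q) := by rw [huv]
    push_cast at this
    rw [ZMod.natCast_self] at this
    rw [mul_comm]
    simpa using this
  set x : ZMod q := (t : ZMod q) * (hunit.unit⁻¹ : Units (ZMod q)) with hx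
  refine ⟨x.val, ZMod.val_lt x, ?_⟩
  have hxq : ((x.val : ℕ) : ZMod q) = x := ZMod.natCast_rightInverse x
  have hmp : ((x.val : ℤ) : ZMod q) * (p : ZMod q) = (t : ZMod q) := by
    push_cast
    rw [hxq, hx, mul_assoc]
    have : ((hunit.unit⁻¹ : Units (ZMod q)) : ZMod q) * (p : ZMod q) = 1 := by
      have := hunit.unit.inv_mul
      simpa [IsUnit.unit_spec] using this
    rw [this, mul_one]
  have hdvd : ((q : ℤ)) ∣ ((x.val : ℤ) * p - t) := by
    rw [← ZMod.intCast_zmod_eq_zero_iff_dvd]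
    push_cast
    rw [sub_eq_zero]
    exact_mod_cast hmp
  obtain ⟨w, hw⟩ := hdvd
  exact ⟨w, by linarith [hw]⟩

lemma block_count {q : ℕ} (hq : 0 < q) {p : ℤ} (hco : IsCoprime p (q : ℤ))
    {α : ℝ} (happ : |α - (p : ℝ) / (q : ℝ)| ≤ 1 / (q : ℝ) ^ 2)
    (A u L : ℝ) (hL1 : L ≤ 1) :
    L * q - 3 ≤ (((Finset.range q).filter
      (fun m : ℕ => ∃ z : ℤ, A + (m : ℝ) * α + (z : ℝ) ∈ Set.Ioo u (u + L))).card : ℝ) := by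
  have hqR : (0:ℝ) < q := by exact_mod_cast hq
  set c : ℝ := (u - A) * q with hc
  set S : Finset ℤ := Finset.Ioo ⌊c + 1⌋ ⌈c + L * q - 1⌉ with hS
  -- cardinality of S
  have hScard : L * q - 3 ≤ (S.card : ℝ) := by
    rw [hS, Int.card_Ioo]
    have h1 : (⌈c + L * q - 1⌉ - ⌊c + 1⌋ - 1 : ℤ) ≤ ((⌈c + L * q - 1⌉ - ⌊c + 1⌋ - 1).toNat : ℤ) :=
      Int.self_le_toNat _
    have h2 : (c + L * q - 1) - (c + 1) - 1 ≤ ((⌈c + L * q - 1⌉ - ⌊c + 1⌋ - 1 : ℤ) : ℝ) := by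
      push_cast
      have := Int.le_ceil (c + L * q - 1)
      have := Int.floor_le (c + 1)
      linarith
    calc L * q - 3 = (c + L * q - 1) - (c + 1) - 1 := by ring
      _ ≤ ((⌈c + L * q - 1⌉ - ⌊c + 1⌋ - 1 : ℤ) : ℝ) := h2
      _ ≤ _ := by exact_mod_cast h1
  -- the map from S to residues
  have hf : ∀ N : ℤ, ∃ m : ℕ, m < q ∧ ∃ w : ℤ, (m : ℤ) * p = N + w * q :=
    fun N => exists_inv_mod q hq p hco N
  choose f hflt hfw using hf
  -- bounds for elements of S
  have hmem : ∀ N ∈ S, c + 1 < (N : ℝ) ∧ (N : ℝ) < c + L * q - 1 := by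
    intro N hN
    rw [hS, Finset.mem_Ioo] at hN
    constructor
    · have : (⌊c + 1⌋ : ℝ) ≤ c + 1 := Int.floor_le _
      have h2 : ((⌊c + 1⌋ + 1 : ℤ) : ℝ) ≤ (N : ℝ) := by exact_mod_cast hN.1
      have h3 : (c+1) - 1 < (⌊c+1⌋ : ℝ) := by
        have := Int.sub_one_lt_floor (c+1); exact_mod_cast this
      push_cast at h2
      linarith
    · have h2 : (N : ℝ) ≤ ((⌈c + L * q - 1⌉ - 1 : ℤ) : ℝ) := by exact_mod_cast (by omega : N ≤ ⌈c + L * q - 1⌉ - 1)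
      have h3 : (⌈c + L * q - 1⌉ : ℝ) < (c + L * q - 1) + 1 := Int.ceil_lt_add_one _
      push_cast at h2
      linarith
  -- f maps S into the filtered set
  have hmaps : ∀ N ∈ S, f N ∈ (Finset.range q).filter
      (fun m : ℕ => ∃ z : ℤ, A + (m : ℝ) * α + (z : ℝ) ∈ Set.Ioo u (u + L)) := by
    intro N hN
    obtain ⟨hN1, hN2⟩ := hmem N hN
    obtain ⟨w, hw⟩ := hfw N
    refine Finset.mem_filter.2 ⟨Finset.mem_range.2 (hflt N), ⟨-w, ?_⟩⟩
    set m := f N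
    set e : ℝ := α - (p : ℝ) / q with he
    have hq1R : (1:ℝ) ≤ (q:ℝ) := by exact_mod_cast hq
    have hm1 : (m : ℝ) ≤ (q : ℝ) - 1 := by
      have h := hflt N
      have h2 : (m:ℝ) + 1 ≤ (q:ℝ) := by exact_mod_cast Nat.succ_le_of_lt h
      linarith
    have hme : |(m : ℝ) * e| < 1 / q := by
      rw [abs_mul]
      calc |(m:ℝ)| * |e| ≤ ((q:ℝ) - 1) * (1 / (q:ℝ)^2) := by
            apply mul_le_mul _ happ (abs_nonneg _) (by linarith)
            rw [abs_of_nonneg (by positivity)]; exact hm1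
        _ < 1 / q := by
            rw [mul_one_div, div_lt_div_iff₀ (by positivity) hqR]
            nlinarith
    have hmain : A + (m : ℝ) * α + ((-w : ℤ) : ℝ) = A + (N : ℝ) / q + (m : ℝ) * e := by
      have hmp : ((m : ℤ) : ℝ) * (p : ℝ) = (N : ℝ) + (w : ℝ) * q := by exact_mod_cast congrArg (Int.cast : ℤ → ℝ) hw
      push_cast at hmp ⊢
      field_simp [he] at *
      nlinarith [hmp]
    rw [hmain]
    have habs' := abs_lt.1 hme
    have key1 : (c + 1) / (q:ℝ) < (N:ℝ) / q := by gcongr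
    have key2 : (N:ℝ) / q < (c + L * q - 1) / q := by gcongr
    have hcq1 : (c + 1) / (q:ℝ) = u - A + 1/q := by
      rw [hc]; field_simp
    have hcq2 : (c + L * (q:ℝ) - 1) / (q:ℝ) = u - A + L - 1/q := by
      rw [hc]; field_simp
    constructor
    · have : u + 1/q < A + (N:ℝ)/q := by
        rw [hcq1] at key1; linarith
      linarith [habs'.1]
    · have : A + (N:ℝ)/q < u + L - 1/q := by
        rw [hcq2] at key2; linarith
      linarith [habs'.2]
  -- injectivity on S
  have hinj : Set.InjOn f S := by
    intro N hN N' hN' hfe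
    obtain ⟨w, hw⟩ := hfw N
    obtain ⟨w', hw'⟩ := hfw N'
    have hdvd : (q : ℤ) ∣ (N - N') := by
      refine ⟨w' - w, ?_⟩
      have : ((f N : ℤ)) * p = ((f N' : ℤ)) * p := by rw [hfe]
      rw [hw, hw'] at this
      linarith
    have habs : |N - N'| < q := by
      obtain ⟨a1, a2⟩ := hmem N hN
      obtain ⟨b1, b2⟩ := hmem N' hN'
      have : |((N - N' : ℤ) : ℝ)| < (q : ℝ) := by
        rw [abs_lt]
        push_cast
        constructor <;> nlinarith
      exact_mod_cast this
    have := Int.eq_zero_of_abs_lt_dvd hdvd habs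
    omega
  have hcard := Finset.card_le_card_of_injOn f hmaps hinj
  calc L * q - 3 ≤ (S.card : ℝ) := hScard
    _ ≤ _ := by exact_mod_cast hcard

lemma window_count {q : ℕ} (hq : 0 < q) {p : ℤ} (hco : IsCoprime p (q : ℤ))
    {α : ℝ} (happ : |α - (p : ℝ) / (q : ℝ)| ≤ 1 / (q : ℝ) ^ 2)
    (u L : ℝ) (hL1 : L ≤ 1) (T M : ℕ) :
    ((M / q : ℕ) : ℝ) * (L * q - 3) ≤ (((Finset.Ico T (T + M)).filter
      (fun n : ℕ => ∃ z : ℤ, (n : ℝ) * α + (z : ℝ) ∈ Set.Ioo u (u + L))).card : ℝ) := by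
  set c : ℕ := M / q with hc
  set P : ℕ → Prop := fun n => ∃ z : ℤ, (n : ℝ) * α + (z : ℝ) ∈ Set.Ioo u (u + L) with hP
  set G : Finset ℕ := (Finset.range c).biUnion
    (fun i => ((Finset.range q).filter (fun m : ℕ => P (T + i * q + m))).image
      (fun m => T + i * q + m)) with hG
  have hGsub : G ⊆ (Finset.Ico T (T + M)).filter P := by
    intro n hn
    rw [hG, Finset.mem_biUnion] at hn
    obtain ⟨i, hi, hn⟩ := hn
    rw [Finset.mem_image] at hn
    obtain ⟨m, hm, rfl⟩ := hn
    rw [Finset.mem_filter, Finset.mem_range] at hm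
    rw [Finset.mem_range] at hi
    refine Finset.mem_filter.2 ⟨Finset.mem_Ico.2 ⟨by omega, ?_⟩, hm.2⟩
    have h1 : (i + 1) * q ≤ c * q := Nat.mul_le_mul_right _ (by omega)
    have h2 : c * q ≤ M := Nat.div_mul_le_self M q
    have h3 : (i + 1) * q = i * q + q := by ring
    have := hm.1
    omega
  have hdisj : ∀ i ∈ Finset.range c, ∀ j ∈ Finset.range c, i ≠ j →
      Disjoint (((Finset.range q).filter (fun m : ℕ => P (T + i * q + m))).image
        (fun m => T + i * q + m))
        (((Finset.range q).filter (fun m : ℕ => P (T + j * q + m))).image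
        (fun m => T + j * q + m)) := by
    intro i _ j _ hij
    rw [Finset.disjoint_left]
    intro n hn hn'
    rw [Finset.mem_image] at hn hn'
    obtain ⟨m, hm, h1⟩ := hn
    obtain ⟨m', hm', h2⟩ := hn'
    rw [Finset.mem_filter, Finset.mem_range] at hm hm'
    have hm1 := hm.1; have hm1' := hm'.1
    rcases hij.lt_or_gt with h | h
    · have hstep : (i + 1) * q ≤ j * q := Nat.mul_le_mul_right _ (by omega)
      have hexp : (i + 1) * q = i * q + q := by ring
      omega
    · have hstep : (j + 1) * q ≤ i * q := Nat.mul_le_mul_right _ (by omega)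
      have hexp : (j + 1) * q = j * q + q := by ring
      omega
  have hcardG : (G.card : ℝ) = ∑ i ∈ Finset.range c,
      ((((Finset.range q).filter (fun m : ℕ => P (T + i * q + m))).card : ℝ)) := by
    rw [hG, Finset.card_biUnion hdisj]
    push_cast
    refine Finset.sum_congr rfl (fun i _ => ?_)
    congr 1
    rw [Finset.card_image_of_injective _ (fun x y h => by omega)]
  have hblock : ∀ i ∈ Finset.range c, L * q - 3 ≤
      ((((Finset.range q).filter (fun m : ℕ => P (T + i * q + m))).card : ℝ)) := by
    intro i _
    have hb := block_count hq hco happ (((T + i * q : ℕ) : ℝ) * α) u L hL1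
    have hEq : ((Finset.range q).filter
        (fun m : ℕ => ∃ z : ℤ, ((T + i * q : ℕ) : ℝ) * α + (m : ℝ) * α + (z : ℝ)
          ∈ Set.Ioo u (u + L))) =
        ((Finset.range q).filter (fun m : ℕ => P (T + i * q + m))) := by
      apply Finset.filter_congr
      intro m _
      rw [hP]
      constructor
      · rintro ⟨z, hz⟩
        exact ⟨z, by push_cast at hz ⊢; convert hz using 2; ring⟩
      · rintro ⟨z, hz⟩
        exact ⟨z, by push_cast at hz ⊢; convert hz using 2; ring⟩
    rw [← hEq]
    exact hb
  calc ((c : ℕ) : ℝ) * (L * q - 3) = ∑ _i ∈ Finset.range c, (L * q - 3) := by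
        rw [Finset.sum_const, Finset.card_range]; ring
    _ ≤ ∑ i ∈ Finset.range c,
        ((((Finset.range q).filter (fun m : ℕ => P (T + i * q + m))).card : ℝ)) :=
        Finset.sum_le_sum hblock
    _ = (G.card : ℝ) := hcardG.symm
    _ ≤ _ := by exact_mod_cast Finset.card_le_card hGsub

lemma coe_add_int (t : ℝ) (z : ℤ) : ((t + (z : ℝ) : ℝ) : AddCircle (1 : ℝ)) = (t : ℝ) := by
  have h0 : (((z : ℝ)) : AddCircle (1 : ℝ)) = 0 :=
    (AddCircle.coe_eq_zero_iff _).2 ⟨z, by simp⟩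
  rw [AddCircle.coe_add, h0, add_zero]

lemma mem_image_iff (u v x : ℝ) :
    (x : AddCircle (1 : ℝ)) ∈ (fun y : ℝ => (y : AddCircle (1 : ℝ))) '' Set.Ioo u v ↔
      ∃ z : ℤ, x + (z : ℝ) ∈ Set.Ioo u v := by
  constructor
  · rintro ⟨y, hy, hxy⟩
    have := (QuotientAddGroup.eq (s := AddSubgroup.zmultiples (1:ℝ)) (a := y) (b := x)).1 hxy
    obtain ⟨z, hz⟩ := AddSubgroup.mem_zmultiples_iff.1 this
    refine ⟨-z, ?_⟩
    have h : (z : ℝ) = -y + x := by simpa using hz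
    have hx : x + ((-z : ℤ) : ℝ) = y := by push_cast; linarith
    rwa [hx]
  · rintro ⟨z, hz⟩
    exact ⟨x + z, hz, coe_add_int x z⟩

lemma closedBall_subset_image {a b u v x r : ℝ} (hr : 0 ≤ r) (h1 : a ≤ u - r)
    (h2 : v + r ≤ b) (hz : ∃ z : ℤ, x + (z : ℝ) ∈ Set.Ioo u v) :
    Metric.closedBall ((x : ℝ) : AddCircle (1 : ℝ)) r ⊆
      (fun y : ℝ => (y : AddCircle (1 : ℝ))) '' Set.Ioo a b := by
  obtain ⟨z, hz1, hz2⟩ := hz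
  intro y hy
  induction y using QuotientAddGroup.induction_on with
  | H y₀ =>
  have hdist : dist ((y₀ : ℝ) : AddCircle (1:ℝ)) ((x : ℝ) : AddCircle (1:ℝ)) ≤ r :=
    Metric.mem_closedBall.1 hy
  set d : ℝ := y₀ - x with hd
  have hnorm : dist ((y₀ : ℝ) : AddCircle (1:ℝ)) ((x : ℝ) : AddCircle (1:ℝ)) = |d - round d| := by
    rw [dist_eq_norm, ← AddCircle.coe_sub, AddCircle.norm_eq]
    simp [hd]
  set w : ℝ := d - round d with hw
  have hwr : |w| ≤ r := by rw [← hnorm]; exact hdist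
  refine ⟨x + z + w, ?_, ?_⟩
  · constructor
    · have := abs_le.1 hwr
      nlinarith [this.1]
    · have := abs_le.1 hwr
      nlinarith [this.2]
  · show ((x + (z:ℝ) + w : ℝ) : AddCircle (1:ℝ)) = ((y₀ : ℝ) : AddCircle (1:ℝ))
    have : y₀ = (x + (z:ℝ) + w) + ((round d - z : ℤ) : ℝ) := by push_cast; rw [hw, hd]; ring
    rw [this, coe_add_int]

lemma vol_eq {a b : ℝ} (hab : a < b) (hb : b ≤ a + 1) :
    (volume ((fun x : ℝ => (x : AddCircle (1 : ℝ))) '' Set.Ioo a b)).toReal = b - a := by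
  have hopen : IsOpen ((fun x : ℝ => (x : AddCircle (1 : ℝ))) '' Set.Ioo a b) :=
    QuotientAddGroup.isOpenMap_coe _ isOpen_Ioo
  have hmeas := hopen.measurableSet
  rw [AddCircle.add_projection_respects_measure (1:ℝ) a hmeas]
  have hset : (QuotientAddGroup.mk ⁻¹' ((fun x : ℝ => (x : AddCircle (1 : ℝ))) '' Set.Ioo a b)
      ∩ Set.Ioc a (a + 1)) = Set.Ioo a b := by
    ext x
    simp only [Set.mem_inter_iff, Set.mem_preimage]
    constructor
    · rintro ⟨hx1, hx2⟩
      obtain ⟨z, hz⟩ := (mem_image_iff a b x).1 hx1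
      have hz0 : z = 0 := by
        have h1 : (z : ℝ) < 1 := by
          have := hz.2; have := hx2.1; linarith
        have h2 : (-1 : ℝ) < z := by
          have := hz.1; have := hx2.2; linarith
        have h1' : z < 1 := by exact_mod_cast h1
        have h2' : -1 < z := by exact_mod_cast h2
        omega
      rw [hz0] at hz; simpa using hz
    · intro hx
      refine ⟨(mem_image_iff a b x).2 ⟨0, by simpa using hx⟩, hx.1, by linarith [hx.2]⟩
  rw [hset, Real.volume_Ioo, ENNReal.toReal_ofReal (by linarith)]

end ResonantAux

open ResonantAux

set_option maxHeartbeats 1000000 in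
/-- Proposition 3.2 (interval version): for irrational `α`, `δ > 0` and an interval
`I ⊆ ℝ/ℤ` of positive length, for all large `k` there is a set `𝒟` of integers
`n ∈ [q_k/2, q_k)` with `nα ∈ I`, of cardinality between `(1/8)|I|q_k` and `|I|q_k`,
such that `B(nα, e^{-nδ}) ⊆ I` for every `n ∈ 𝒟`. -/
theorem exists_resonant_collection_interval (α : ℝ) (hα : Irrational α)
    (δ : ℝ) (hδ : 0 < δ) (a b : ℝ) (hab : a < b) (hb : b ≤ a + 1)
    (I : Set (AddCircle (1 : ℝ)))
    (hI : I = (fun x : ℝ => (x : AddCircle (1 : ℝ))) '' Set.Ioo a b) :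
    ∃ K : ℕ, ∀ k : ℕ, K ≤ k →
      ∃ 𝒟 : Finset ℕ,
        (∀ n ∈ 𝒟, qden α k / 2 ≤ (n : ℝ) ∧ (n : ℝ) < qden α k ∧
          (((n : ℝ) * α : ℝ) : AddCircle (1 : ℝ)) ∈ I) ∧
        (1 / 8) * (volume I).toReal * qden α k ≤ (𝒟.card : ℝ) ∧
        (𝒟.card : ℝ) ≤ (volume I).toReal * qden α k ∧
        ∀ n ∈ 𝒟, Metric.closedBall (((n : ℝ) * α : ℝ) : AddCircle (1 : ℝ))
            (Real.exp (-((n : ℝ) * δ))) ⊆ I := by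
  set β : ℝ := b - a with hβ
  have hβ0 : 0 < β := by simp [hβ]; linarith
  have hβ1 : β ≤ 1 := by simp [hβ]; linarith
  have hvol : (volume I).toReal = β := by rw [hI]; exact vol_eq hab hb
  set η : ℝ := β / 16 with hη
  have hη0 : 0 < η := by positivity
  set u : ℝ := a + η with hu
  set L : ℝ := β - 2 * η with hL
  have hL0 : 0 < L := by rw [hL, hη]; linarith
  have hL1 : L ≤ 1 := by rw [hL]; linarith
  have huL : u + L = b - η := by rw [hu, hL, hη, hβ]; ring
  -- fixed block level
  obtain ⟨K₁, hK₁⟩ := qden_ge hα (48 / β)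
  obtain ⟨p', qn, hqn0, hqnval, hqnco, hqnapp⟩ := cf_data hα K₁
  have hqn48 : 48 / β ≤ (qn : ℝ) := by rw [hqnval]; exact hK₁ K₁ le_rfl
  have hqnR : (0:ℝ) < qn := by exact_mod_cast hqn0
  have hβqn : 48 ≤ β * qn := by
    rw [div_le_iff₀ hβ0] at hqn48; linarith
  have hLqn : (13/16) * β * (qn:ℝ) ≤ L * qn - 3 := by
    rw [hL, hη]; nlinarith
  have hLqn0 : (0:ℝ) ≤ L * qn - 3 := by nlinarith
  -- choose K
  obtain ⟨K, hK⟩ := qden_ge hα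
    (max (6 * (1 + (qn:ℝ))) (max (16 / β) (2 * Real.log (16 / β) / δ)))
  refine ⟨K, fun k hk => ?_⟩
  obtain ⟨pk, Q, hQ0, hQval, hQco, hQapp⟩ := cf_data hα k
  have hQC := hK k hk
  rw [← hQval] at hQC
  have hQ6 : 6 * (1 + (qn:ℝ)) ≤ Q := le_trans (le_max_left _ _) hQC
  have hQ16 : 16 / β ≤ (Q:ℝ) := le_trans (le_trans (le_max_left _ _) (le_max_right _ _)) hQC
  have hQlog : 2 * Real.log (16 / β) / δ ≤ (Q:ℝ) :=
    le_trans (le_trans (le_max_right _ _) (le_max_right _ _)) hQC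
  have hQR : (0:ℝ) < Q := by exact_mod_cast hQ0
  set T : ℕ := (Q + 1) / 2 with hT
  set M : ℕ := Q - T with hM
  have hTM : T + M = Q := by omega
  have hT2 : Q ≤ 2 * T := by omega
  have hM2 : (Q:ℝ) - 2 ≤ 2 * M := by
    have h : Q ≤ 2 * M + 2 := by omega
    have h' : (Q:ℝ) ≤ 2 * M + 2 := by exact_mod_cast h
    linarith
  -- window counting
  set F : Finset ℕ := (Finset.Ico T (T + M)).filter
    (fun n : ℕ => ∃ z : ℤ, (n : ℝ) * α + (z : ℝ) ∈ Set.Ioo u (u + L)) with hF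
  have hwin := window_count hqn0 hqnco hqnapp u L hL1 T M
  rw [← hF] at hwin
  set c : ℕ := M / qn with hc
  -- arithmetic: (1/8) β Q ≤ c (L qn - 3)
  have hcqn : (M:ℝ) - qn ≤ (c:ℝ) * qn := by
    have h1 := Nat.div_add_mod M qn
    have h2 : M % qn < qn := Nat.mod_lt _ hqn0
    have h1' : (qn:ℝ) * c + (M % qn : ℕ) = M := by exact_mod_cast h1
    have h2' : ((M % qn : ℕ):ℝ) < qn := by exact_mod_cast h2
    linarith
  have hc0 : (0:ℝ) ≤ c := Nat.cast_nonneg c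
  have hmain : (1/8) * β * (Q:ℝ) ≤ (c:ℝ) * (L * qn - 3) := by
    have s1 : (13/16) * β * ((c:ℝ) * qn) ≤ (c:ℝ) * (L * qn - 3) := by
      calc (13/16) * β * ((c:ℝ) * qn) = (c:ℝ) * ((13/16) * β * qn) := by ring
        _ ≤ (c:ℝ) * (L * qn - 3) := mul_le_mul_of_nonneg_left hLqn hc0
    have s2 : (13/16) * β * ((M:ℝ) - qn) ≤ (13/16) * β * ((c:ℝ) * qn) := by
      apply mul_le_mul_of_nonneg_left hcqn (by positivity)
    have s3 : (13/16) * β * ((Q:ℝ)/2 - 1 - qn) ≤ (13/16) * β * ((M:ℝ) - qn) := by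
      apply mul_le_mul_of_nonneg_left _ (by positivity)
      linarith
    have s4 : (1/8) * β * (Q:ℝ) ≤ (13/16) * β * ((Q:ℝ)/2 - 1 - qn) := by
      have hlin : (1/8) * (Q:ℝ) ≤ (13/16) * ((Q:ℝ)/2 - 1 - qn) := by linarith
      have := mul_le_mul_of_nonneg_left hlin hβ0.le
      linarith
    linarith
  have hcount : (1/8) * β * (Q:ℝ) ≤ (F.card : ℝ) := le_trans hmain (le_trans hwin le_rfl)
  -- pick the subset
  set s : ℕ := ⌈(1/8) * β * (Q:ℝ)⌉₊ with hs
  have hsF : s ≤ F.card := Nat.ceil_le.2 (by exact_mod_cast hcount)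
  obtain ⟨𝒟, h𝒟sub, h𝒟card⟩ := Finset.exists_subset_card_eq hsF
  have hmem𝒟 : ∀ n ∈ 𝒟, (T ≤ n ∧ n < Q) ∧
      ∃ z : ℤ, (n : ℝ) * α + (z : ℝ) ∈ Set.Ioo u (u + L) := by
    intro n hn
    have := h𝒟sub hn
    rw [hF, Finset.mem_filter, Finset.mem_Ico, hTM] at this
    exact ⟨this.1, this.2⟩
  have hexp : ∀ n ∈ 𝒟, Real.exp (-((n : ℝ) * δ)) ≤ η := by
    intro n hn
    obtain ⟨⟨hn1, _⟩, _⟩ := hmem𝒟 n hn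
    have hnT : (T:ℝ) ≤ n := by exact_mod_cast hn1
    have hnQ2 : (Q:ℝ)/2 ≤ (n:ℝ) := by
      have : (Q:ℝ) ≤ 2 * T := by exact_mod_cast hT2
      linarith
    have hlog' : Real.log (16 / β) ≤ (n:ℝ) * δ := by
      have h1 : 2 * Real.log (16/β) / δ ≤ 2 * n := by linarith
      rw [div_le_iff₀ hδ] at h1
      linarith
    have h16β : (0:ℝ) < 16 / β := by positivity
    calc Real.exp (-((n : ℝ) * δ)) ≤ Real.exp (- Real.log (16/β)) := by
          apply Real.exp_le_exp.2; linarith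
      _ = η := by
          rw [← Real.log_inv, Real.exp_log (by positivity)]
          rw [hη]; field_simp
  refine ⟨𝒟, ?_, ?_, ?_, ?_⟩
  · intro n hn
    obtain ⟨⟨hn1, hn2⟩, z, hz⟩ := hmem𝒟 n hn
    refine ⟨?_, ?_, ?_⟩
    · rw [← hQval]
      have : (Q:ℝ) ≤ 2 * T := by exact_mod_cast hT2
      have : (T:ℝ) ≤ n := by exact_mod_cast hn1
      linarith
    · rw [← hQval]; exact_mod_cast hn2
    · rw [hI]
      refine (mem_image_iff a b _).2 ⟨z, ?_, ?_⟩
      · have := hz.1; rw [hu] at this; linarith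
      · have := hz.2; rw [huL] at this; linarith
  · rw [hvol, ← hQval]
    rw [h𝒟card, hs]
    exact Nat.le_ceil _
  · rw [hvol, ← hQval, h𝒟card, hs]
    have h1 : (⌈(1/8) * β * (Q:ℝ)⌉₊ : ℝ) < (1/8) * β * (Q:ℝ) + 1 :=
      Nat.ceil_lt_add_one (by positivity)
    have h2 : (1:ℝ) ≤ (1/16) * β * Q := by
      rw [div_le_iff₀ hβ0] at hQ16
      nlinarith
    linarith
  · intro n hn
    obtain ⟨⟨hn1, hn2⟩, z, hz⟩ := hmem𝒟 n hn
    rw [hI]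
    apply closedBall_subset_image (Real.exp_pos _).le _ _ ⟨z, hz⟩
    · rw [hu]
      have := hexp n hn
      linarith
    · rw [huL]
      have := hexp n hn
      linarith
end

section
/- Let α be irrational with continued fraction convergent denominators (q_n). Let δ > 0, let a be a real number with 0 < a < min{2^{−10}, 2^{−10}·δ}, let j ≥ 1 be an integer with 1/2 ≤ j·2⁹·a·δ^{−1} ≤ 1, let v > 0, and let k ≥ 1 be an integer. Suppose that for each integer i with 0 ≤ i < j we are given a finite set D̃_i of natural numbers with D̃_i ⊆ {n : q_{k+2i}/2 ≤ n < q_{k+2i}} and (1/8)·v·q_{k+2i} ≤ #D̃_i ≤ v·q_{k+2i}. Then there exist subsets D_i ⊆ D̃_i for 0 ≤ i < j such that: (i) the closed balls B(nα, a/(δ·n)) in ℝ/ℤ, taken over all n ∈ ⋃_{0≤i<j} D_i, are pairwise disjoint; and (ii) for each 0 ≤ i < j, #D_i ≥ (1/2)·#D̃_i ≥ (1/16)·v·q_{k+2i}. -/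
open Filter MeasureTheory Set
open scoped ENNReal NNReal Classical

attribute [local instance] Real.fact_zero_lt_one

open GenContFract

namespace Sparse

variable {α : ℝ} (hα : Irrational α)
include hα

lemma not_term (n : ℕ) : ¬(GenContFract.of α).TerminatedAt n := by
  intro h
  obtain ⟨q, hq⟩ := (GenContFract.terminates_iff_rat α).mp ⟨n, h⟩
  exact hα ⟨q, hq.symm⟩

lemma stream_some (n : ℕ) :
    ∃ ifp, IntFractPair.stream α n = some ifp ∧ ifp.fr ≠ 0 ∧ 0 < ifp.fr := by
  have h1 : IntFractPair.stream α n ≠ none := by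
    cases n with
    | zero => simp [IntFractPair.stream_zero]
    | succ m =>
      intro h
      exact not_term hα m
        (of_terminatedAt_n_iff_succ_nth_intFractPair_stream_eq_none.mpr h)
  obtain ⟨ifp, hifp⟩ := Option.ne_none_iff_exists'.mp h1
  refine ⟨ifp, hifp, ?_, ?_⟩
  · intro h0
    exact not_term hα n (of_terminatedAt_n_iff_succ_nth_intFractPair_stream_eq_none.mpr
      (IntFractPair.stream_eq_none_of_fr_eq_zero hifp h0))
  · rcases (IntFractPair.nth_stream_fr_nonneg hifp).lt_or_eq with h | h
    · exact h
    · exact absurd h.symm (by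
        intro h0
        exact not_term hα n (of_terminatedAt_n_iff_succ_nth_intFractPair_stream_eq_none.mpr
          (IntFractPair.stream_eq_none_of_fr_eq_zero hifp h0)))

lemma s_some (n : ℕ) : ∃ gp, (GenContFract.of α).s.get? n = some gp ∧ gp.a = 1 ∧
    ∃ z : ℤ, gp.b = (z : ℝ) ∧ 1 ≤ z := by
  obtain ⟨gp, hgp⟩ := Option.ne_none_iff_exists'.mp
    ((not_congr terminatedAt_iff_s_none).mp (not_term hα n))
  have ha : gp.a = 1 := of_partNum_eq_one (partNum_eq_s_a hgp)
  obtain ⟨z, hz⟩ := exists_int_eq_of_partDen (partDen_eq_s_b hgp)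
  have hb1 : (1 : ℝ) ≤ gp.b := of_one_le_get?_partDen (partDen_eq_s_b hgp)
  refine ⟨gp, hgp, ha, z, hz, ?_⟩
  exact_mod_cast hz ▸ hb1

lemma contsAux_int (n : ℕ) : ∃ A B : ℤ,
    (GenContFract.of α).contsAux n = ⟨(A : ℝ), (B : ℝ)⟩ := by
  induction n using Nat.strong_induction_on with
  | _ n ih =>
    match n with
    | 0 => exact ⟨1, 0, by simp [zeroth_contAux_eq_one_zero]⟩
    | 1 => exact ⟨⌊α⌋, 1, by
        rw [first_contAux_eq_h_one, of_h_eq_floor]; norm_num⟩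
    | (m + 2) =>
      obtain ⟨A, B, hAB⟩ := ih (m + 1) (by omega)
      obtain ⟨A', B', hAB'⟩ := ih m (by omega)
      obtain ⟨gp, hgp, hga, z, hz, -⟩ := s_some hα m
      refine ⟨z * A + A', z * B + B', ?_⟩
      rw [contsAux_recurrence hgp hAB' hAB, hga, hz]
      push_cast
      simp [one_mul]

omit hα in
lemma one_le_dens (n : ℕ) : (1 : ℝ) ≤ (GenContFract.of α).dens n := by
  induction n with
  | zero => simp [zeroth_den_eq_one]
  | succ m ih => exact ih.trans (of_den_mono)

omit hα in
lemma dens_mono : Monotone ((GenContFract.of α).dens) :=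
  monotone_nat_of_le_succ (fun _ => of_den_mono)

omit hα in
lemma dens_contsAux (n : ℕ) :
    (GenContFract.of α).dens n = ((GenContFract.of α).contsAux (n + 1)).b := by
  rw [den_eq_conts_b, nth_cont_eq_succ_nth_contAux]

omit hα in
lemma nums_contsAux (n : ℕ) :
    (GenContFract.of α).nums n = ((GenContFract.of α).contsAux (n + 1)).a := by
  rw [num_eq_conts_a, nth_cont_eq_succ_nth_contAux]

lemma dens_add_two (n : ℕ) : (GenContFract.of α).dens (n + 1) + (GenContFract.of α).dens n
    ≤ (GenContFract.of α).dens (n + 2) := by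
  obtain ⟨gp, hgp, hga, z, hz, hz1⟩ := s_some hα (n + 1)
  have hrec := contsAux_recurrence hgp rfl rfl
  have h2 : (GenContFract.of α).dens (n+2) =
      gp.b * (GenContFract.of α).dens (n+1) + (GenContFract.of α).dens n := by
    rw [dens_contsAux, dens_contsAux, dens_contsAux, hrec, hga]
    simp
  rw [h2]
  have h1 : (1:ℝ) ≤ gp.b := by rw [hz]; exact_mod_cast hz1
  nlinarith [one_le_dens (α := α) (n+1), one_le_dens (α := α) n]

lemma two_dens_le (n : ℕ) : 2 * (GenContFract.of α).dens n
    ≤ (GenContFract.of α).dens (n + 2) := by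
  have := dens_add_two hα n
  have := dens_mono (α := α) (Nat.le_succ n)
  linarith

end Sparse

namespace Sparse

variable {α : ℝ} (hα : Irrational α)
include hα

lemma err (n : ℕ) : ∃ c : ℝ, 0 < c ∧
    1 / ((GenContFract.of α).dens n + (GenContFract.of α).dens (n + 1)) ≤ c ∧
    (GenContFract.of α).dens n * α - (GenContFract.of α).nums n = (-1) ^ n * c := by
  obtain ⟨ifp, hifp, hfr0, hfrpos⟩ := stream_some hα n
  have hsub := sub_convs_eq hifp
  simp only [if_neg hfr0] at hsub
  set B : ℝ := ((GenContFract.of α).contsAux (n + 1)).b with hBdef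
  set pB : ℝ := ((GenContFract.of α).contsAux n).b with hpBdef
  have hB1 : (1 : ℝ) ≤ B := by rw [hBdef, ← dens_contsAux]; exact one_le_dens n
  have hpB : (0 : ℝ) ≤ pB := zero_le_of_contsAux_b
  have hfri : 0 < ifp.fr⁻¹ := inv_pos.mpr hfrpos
  have hden_pos : 0 < ifp.fr⁻¹ * B + pB := by nlinarith
  refine ⟨(ifp.fr⁻¹ * B + pB)⁻¹, inv_pos.mpr hden_pos, ?_, ?_⟩
  · -- lower bound
    have hgp := get?_of_eq_some_of_get?_intFractPair_stream_fr_ne_zero hifp hfr0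
    have hrec := contsAux_recurrence hgp rfl rfl
    have hdens1 : (GenContFract.of α).dens (n + 1)
        = (⌊ifp.fr⁻¹⌋ : ℝ) * B + pB := by
      rw [dens_contsAux, hrec]
      simp [IntFractPair.of]
      rfl
    have hflt : ifp.fr⁻¹ < ⌊ifp.fr⁻¹⌋ + 1 := Int.lt_floor_add_one _
    have hle : ifp.fr⁻¹ * B + pB ≤
        (GenContFract.of α).dens n + (GenContFract.of α).dens (n + 1) := by
      have hdn : (GenContFract.of α).dens n = B := dens_contsAux n
      rw [hdens1, hdn]
      nlinarith
    rw [one_div]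
    exact inv_anti₀ hden_pos hle
  · have hBne : B ≠ 0 := by linarith
    have hconv : (GenContFract.of α).convs n
        = (GenContFract.of α).nums n / (GenContFract.of α).dens n :=
      conv_eq_num_div_den
    have hdn : (GenContFract.of α).dens n = B := dens_contsAux n
    rw [hconv, hdn] at hsub
    have h2 : α - (GenContFract.of α).nums n / B = (-1) ^ n / (B * (ifp.fr⁻¹ * B + pB)) := hsub
    rw [hdn]
    field_simp at h2 ⊢
    nlinarith [h2]

lemma key (M : ℕ) (m p : ℤ) (hm : 0 < m)
    (hmlt : (m : ℝ) < (GenContFract.of α).dens (M + 1)) :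
    1 / (2 * (GenContFract.of α).dens (M + 1)) ≤ |(m : ℝ) * α - p| := by
  obtain ⟨A', B', hAB'⟩ := contsAux_int hα (M + 1)
  obtain ⟨A, B, hAB⟩ := contsAux_int hα (M + 2)
  have hnum' : (GenContFract.of α).nums M = (A' : ℝ) := by rw [nums_contsAux, hAB']
  have hden' : (GenContFract.of α).dens M = (B' : ℝ) := by rw [dens_contsAux, hAB']
  have hnum : (GenContFract.of α).nums (M + 1) = (A : ℝ) := by rw [nums_contsAux, hAB]
  have hden : (GenContFract.of α).dens (M + 1) = (B : ℝ) := by rw [dens_contsAux, hAB]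
  -- determinant
  have hdetR := (SimpContFract.of α).determinant (not_terminatedAt_n := not_term hα M)
  rw [show ((SimpContFract.of α : GenContFract ℝ)) = GenContFract.of α from rfl] at hdetR
  rw [hnum', hden', hnum, hden] at hdetR
  have hdetZ : A' * B - B' * A = (-1) ^ (M + 1) := by exact_mod_cast hdetR
  -- integer bounds
  have hB'1 : (1 : ℤ) ≤ B' := by
    have := one_le_dens (α := α) M; rw [hden'] at this; exact_mod_cast this
  have hB1 : (1 : ℤ) ≤ B := by
    have := one_le_dens (α := α) (M + 1); rw [hden] at this; exact_mod_cast this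
  have hmB : m < B := by rw [hden] at hmlt; exact_mod_cast hmlt
  -- error terms
  obtain ⟨c1, hc1pos, hc1low, he1⟩ := err hα M
  obtain ⟨c2, hc2pos, -, he2⟩ := err hα (M + 1)
  rw [hnum', hden'] at he1
  rw [hnum, hden] at he2
  -- solve for x, y
  set ε : ℤ := (-1) ^ (M + 1) with hε
  have hεsq : ε * ε = 1 := by rw [hε, ← mul_pow]; norm_num
  set x : ℤ := -ε * (p * B' - m * A') with hx
  set y : ℤ := -ε * (m * A - p * B) with hy
  have hxB : x * B + y * B' = m := by
    rw [hx, hy]; linear_combination (ε * m) * hdetZ + m * hεsq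
  have hxA : x * A + y * A' = p := by
    rw [hx, hy]; linear_combination (ε * p) * hdetZ + p * hεsq
  have hmR : (m : ℝ) = (x : ℝ) * B + (y : ℝ) * B' := by exact_mod_cast hxB.symm
  have hpR : (p : ℝ) = (x : ℝ) * A + (y : ℝ) * A' := by exact_mod_cast hxA.symm
  have hreal : (m : ℝ) * α - p
      = (x : ℝ) * ((B : ℝ) * α - A) + (y : ℝ) * ((B' : ℝ) * α - A') := by
    rw [hmR, hpR]; ring
  rw [he1, he2] at hreal
  have hsgn : ((-1 : ℝ)) ^ (M + 1) = -((-1 : ℝ)) ^ M := by ring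
  have hreal2 : (m : ℝ) * α - p = (-1 : ℝ) ^ M * ((y : ℝ) * c1 - (x : ℝ) * c2) := by
    rw [hreal, hsgn]; ring
  have habs : |(m : ℝ) * α - p| = |(y : ℝ) * c1 - (x : ℝ) * c2| := by
    rw [hreal2, abs_mul, abs_pow, abs_neg, abs_one, one_pow, one_mul]
  -- lower bound for c1
  have hdenspos : 0 < (GenContFract.of α).dens (M + 1) := lt_of_lt_of_le one_pos (one_le_dens _)
  have hc1ge : 1 / (2 * (GenContFract.of α).dens (M + 1)) ≤ c1 := by
    refine le_trans ?_ hc1low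
    have h0 : 0 < (GenContFract.of α).dens M := lt_of_lt_of_le one_pos (one_le_dens _)
    rw [div_le_div_iff₀ (by linarith) (by linarith)]
    have := dens_mono (α := α) (Nat.le_succ M)
    nlinarith
  rw [habs]
  -- case analysis
  have hyne : y ≠ 0 := by
    intro h0
    rw [h0] at hxB
    simp only [zero_mul, add_zero] at hxB
    have hxpos : 0 < x := by
      rcases le_or_gt x 0 with h | h
      · nlinarith
      · exact h
    nlinarith
  have hy1 : (1 : ℝ) ≤ |(y : ℝ)| := by
    rw [← Int.cast_abs]
    exact_mod_cast Int.one_le_abs hyne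
  rcases eq_or_ne x 0 with hx0 | hx0
  · rw [hx0]
    push_cast
    rw [zero_mul, sub_zero, abs_mul]
    calc 1 / (2 * (GenContFract.of α).dens (M + 1)) ≤ c1 := hc1ge
    _ = 1 * |c1| := by rw [one_mul, abs_of_pos hc1pos]
    _ ≤ |(y : ℝ)| * |c1| := by
        exact mul_le_mul_of_nonneg_right hy1 (abs_nonneg _)
  · -- x ≠ 0, y ≠ 0 : opposite signs
    have hcases : (0 < x ∧ y < 0) ∨ (x < 0 ∧ 0 < y) := by
      rcases lt_or_gt_of_ne hx0 with hxneg | hxpos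
      · rcases lt_or_gt_of_ne hyne with hyneg | hypos
        · exfalso; nlinarith
        · exact Or.inr ⟨hxneg, hypos⟩
      · rcases lt_or_gt_of_ne hyne with hyneg | hypos
        · exact Or.inl ⟨hxpos, hyneg⟩
        · exfalso; nlinarith
    refine hc1ge.trans ?_
    rcases hcases with ⟨hxp, hyn⟩ | ⟨hxn, hyp⟩
    · have hxR : (1 : ℝ) ≤ (x : ℝ) := by exact_mod_cast hxp
      have hyR : (y : ℝ) ≤ -1 := by
        have h' : y ≤ -1 := by omega
        exact_mod_cast h'
      rw [abs_sub_comm]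
      refine le_abs.mpr (Or.inl ?_)
      have h1 : c1 ≤ -(y : ℝ) * c1 := le_mul_of_one_le_left hc1pos.le (by linarith)
      have h2 : (0 : ℝ) ≤ (x : ℝ) * c2 := mul_nonneg (by linarith) hc2pos.le
      linarith
    · have hxR : (x : ℝ) ≤ -1 := by
        have h' : x ≤ -1 := by omega
        exact_mod_cast h'
      have hyR : (1 : ℝ) ≤ (y : ℝ) := by exact_mod_cast hyp
      refine le_abs.mpr (Or.inl ?_)
      have h1 : c1 ≤ (y : ℝ) * c1 := le_mul_of_one_le_left hc1pos.le hyR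
      have h2 : (0 : ℝ) ≤ -(x : ℝ) * c2 := mul_nonneg (by linarith) hc2pos.le
      linarith

end Sparse

namespace Sparse

lemma round_min (x : ℝ) (p : ℤ) : |x - round x| ≤ |x - p| := by
  by_contra h
  push_neg at h
  have h1 : |x - round x| ≤ 1 / 2 := abs_sub_round x
  have h2 : |((round x : ℝ)) - p| < 1 := by
    calc |((round x : ℝ)) - p| ≤ |(round x : ℝ) - x| + |x - p| := abs_sub_le _ _ _
    _ = |x - round x| + |x - p| := by rw [abs_sub_comm]
    _ < 1 := by linarith
  have h3 : |round x - p| < 1 := by exact_mod_cast h2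
  have : round x = p := by
    have h4 := abs_lt.mp h3
    omega
  rw [this] at h
  exact absurd h (lt_irrefl _)

lemma norm_le_abs (x : ℝ) : ‖((x : ℝ) : AddCircle (1 : ℝ))‖ ≤ |x| := by
  rw [AddCircle.norm_eq]
  simpa using round_min x 0

lemma coe_int_eq_zero (z : ℤ) : (((z : ℝ)) : AddCircle (1 : ℝ)) = 0 :=
  (AddCircle.coe_eq_zero_iff _).mpr ⟨z, by simp⟩

lemma dist_coe (u v : ℝ) :
    dist ((u : ℝ) : AddCircle (1 : ℝ)) ((v : ℝ) : AddCircle (1 : ℝ))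
      = ‖(((u - v : ℝ)) : AddCircle (1 : ℝ))‖ := by
  rw [dist_eq_norm]
  rfl

lemma coe_sub_int (x : ℝ) (z : ℤ) :
    (((x - z : ℝ)) : AddCircle (1 : ℝ)) = ((x : ℝ) : AddCircle (1 : ℝ)) := by
  have : (((x - z : ℝ)) : AddCircle (1 : ℝ))
      = ((x : ℝ) : AddCircle (1 : ℝ)) - (((z : ℝ)) : AddCircle (1 : ℝ)) := rfl
  rw [this, coe_int_eq_zero, sub_zero]

lemma card_sep (T : Finset ℕ) (f : ℕ → ℝ) (c L s : ℝ) (hs : 0 < s) (hL : 0 ≤ L)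
    (hmem : ∀ n ∈ T, c ≤ f n ∧ f n ≤ c + L)
    (hsep : ∀ n ∈ T, ∀ n' ∈ T, n ≠ n' → s ≤ |f n - f n'|) :
    (T.card : ℝ) ≤ L / s + 1 := by
  classical
  have hcard : T.card ≤ (Finset.range (⌊L / s⌋₊ + 1)).card := by
    apply Finset.card_le_card_of_injOn (fun n => ⌊(f n - c) / s⌋₊)
    · intro n hn
      simp only [Finset.mem_range]
      have h1 : (f n - c) / s ≤ L / s :=
        (div_le_div_iff_of_pos_right hs).mpr (by linarith [(hmem n hn).2])
      have := Nat.floor_le_floor (R := ℝ) h1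
      exact Finset.mem_coe.mpr (Finset.mem_range.mpr (by omega))
    · intro n hn n' hn' heq
      by_contra hne
      have h1 : 0 ≤ (f n - c) / s := by
        apply div_nonneg ?_ hs.le
        linarith [(hmem n hn).1]
      have h1' : 0 ≤ (f n' - c) / s := by
        apply div_nonneg ?_ hs.le
        linarith [(hmem n' hn').1]
      have h2 : |(f n - c) / s - (f n' - c) / s| < 1 := by
        simp only at heq
        rw [abs_sub_lt_iff]
        constructor
        · calc (f n - c)/s - (f n' - c)/s < (⌊(f n - c)/s⌋₊ + 1) - ⌊(f n' - c)/s⌋₊ := by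
                have := Nat.lt_floor_add_one ((f n - c)/s)
                have := Nat.floor_le h1'
                push_cast
                linarith
          _ = 1 := by rw [heq]; ring
        · calc (f n' - c)/s - (f n - c)/s < (⌊(f n' - c)/s⌋₊ + 1) - ⌊(f n - c)/s⌋₊ := by
                have := Nat.lt_floor_add_one ((f n' - c)/s)
                have := Nat.floor_le h1
                push_cast
                linarith
          _ = 1 := by rw [heq]; ring
      have h3 : |f n - f n'| < s := by
        have : (f n - c) / s - (f n' - c) / s = (f n - f n') / s := by ring
        rw [this, abs_div, abs_of_pos hs, div_lt_one hs] at h2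
        exact h2
      exact absurd (hsep n hn n' hn' hne) (by linarith)
  have h4 : ((⌊L / s⌋₊ : ℝ)) ≤ L / s := Nat.floor_le (by positivity)
  calc (T.card : ℝ) ≤ ((⌊L / s⌋₊ + 1 : ℕ) : ℝ) := by
        exact_mod_cast (by simpa using hcard)
  _ ≤ L / s + 1 := by push_cast; linarith

end Sparse
namespace Sparse

variable {α : ℝ} (hα : Irrational α)

lemma dist_le_not_disjoint {E : Type*} [PseudoMetricSpace E] {x y : E} {r r' : ℝ}
    (h : ¬ Disjoint (Metric.closedBall x r) (Metric.closedBall y r')) : dist x y ≤ r + r' := by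
  obtain ⟨z, hz1, hz2⟩ := Set.not_disjoint_iff.mp h
  have h1 : dist z x ≤ r := Metric.mem_closedBall.mp hz1
  have h2 : dist z y ≤ r' := Metric.mem_closedBall.mp hz2
  calc dist x y ≤ dist x z + dist z y := dist_triangle _ _ _
  _ ≤ r + r' := by rw [dist_comm x z]; exact add_le_add h1 h2

include hα

lemma norm_circle (N : ℕ) (hN : 1 ≤ N) (m : ℤ) (hm : m ≠ 0)
    (hmlt : |(m : ℝ)| < (GenContFract.of α).dens N) :
    1 / (2 * (GenContFract.of α).dens N)
      ≤ ‖(((m : ℝ) * α : ℝ) : AddCircle (1 : ℝ))‖ := by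
  obtain ⟨M, rfl⟩ : ∃ M, N = M + 1 := ⟨N - 1, by omega⟩
  rw [AddCircle.norm_eq]
  simp only [inv_one, one_mul, mul_one]
  rcases hm.lt_or_gt with hneg | hpos
  · have hmlt' : ((-m : ℤ) : ℝ) < (GenContFract.of α).dens (M + 1) := by
      rw [abs_of_neg (by exact_mod_cast hneg : ((m : ℤ) : ℝ) < 0)] at hmlt
      push_cast
      linarith
    have h := key hα M (-m) (-(round ((m : ℝ) * α))) (by omega) hmlt'
    refine h.trans_eq ?_
    push_cast
    rw [show -(m : ℝ) * α - -(round ((m : ℝ) * α) : ℤ)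
      = -((m : ℝ) * α - round ((m : ℝ) * α)) by push_cast; ring, abs_neg]
  · have hmlt' : ((m : ℤ) : ℝ) < (GenContFract.of α).dens (M + 1) := by
      rwa [abs_of_pos (by exact_mod_cast hpos : (0:ℝ) < ((m : ℤ) : ℝ))] at hmlt
    exact key hα M m (round ((m : ℝ) * α)) hpos hmlt'

lemma dist_sep (N : ℕ) (hN : 1 ≤ N) (n n' : ℕ) (hne : n ≠ n')
    (h1 : (n : ℝ) < (GenContFract.of α).dens N)
    (h2 : (n' : ℝ) < (GenContFract.of α).dens N) :
    1 / (2 * (GenContFract.of α).dens N)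
      ≤ dist (((n : ℝ) * α : ℝ) : AddCircle (1 : ℝ))
          (((n' : ℝ) * α : ℝ) : AddCircle (1 : ℝ)) := by
  rw [dist_coe]
  have heq : ((n : ℝ) * α - (n' : ℝ) * α) = (((n : ℤ) - n' : ℤ) : ℝ) * α := by
    push_cast; ring
  rw [heq]
  refine norm_circle hα N hN ((n : ℤ) - n') (by
    intro h0
    exact hne (by exact_mod_cast sub_eq_zero.mp h0)) ?_
  rw [abs_lt]
  constructor
  · push_cast
    have : (0:ℝ) ≤ (n : ℝ) := Nat.cast_nonneg n
    have : (0:ℝ) ≤ (n' : ℝ) := Nat.cast_nonneg n'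
    linarith
  · push_cast
    have : (0:ℝ) ≤ (n' : ℝ) := Nat.cast_nonneg n'
    linarith

lemma bad_count (a δ : ℝ) (hδ : 0 < δ) (ha0 : 0 < a)
    (N N' : ℕ) (hN : 1 ≤ N) (hN' : 1 ≤ N')
    (hNN' : (GenContFract.of α).dens N ≤ (GenContFract.of α).dens N')
    (n : ℕ) (hn : (n : ℝ) ≠ 0)
    (hrn : a / (δ * n) ≤ 2 * a / (δ * (GenContFract.of α).dens N))
    (hnlt : (n : ℝ) < (GenContFract.of α).dens N')
    (T : Finset ℕ)
    (hT : ∀ n' ∈ T, (GenContFract.of α).dens N' / 2 ≤ (n' : ℝ) ∧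
      (n' : ℝ) < (GenContFract.of α).dens N')
    (hne : ∀ n' ∈ T, n ≠ n') :
    (Finset.card (T.filter (fun (n' : ℕ) => ¬ Disjoint
        (Metric.closedBall (((n : ℝ) * α : ℝ) : AddCircle (1 : ℝ)) (a / (δ * (n : ℝ))))
        (Metric.closedBall (((n' : ℝ) * α : ℝ) : AddCircle (1 : ℝ)) (a / (δ * (n' : ℝ)))))) : ℝ)
      ≤ 24 * a * (GenContFract.of α).dens N' / (δ * (GenContFract.of α).dens N) := by
  classical
  set Q : ℝ := (GenContFract.of α).dens N with hQdef
  set Q' : ℝ := (GenContFract.of α).dens N' with hQ'def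
  have hQ1 : (1 : ℝ) ≤ Q := one_le_dens N
  have hQ'1 : (1 : ℝ) ≤ Q' := one_le_dens N'
  set bad := T.filter (fun (n' : ℕ) => ¬ Disjoint
      (Metric.closedBall (((n : ℝ) * α : ℝ) : AddCircle (1 : ℝ)) (a / (δ * (n : ℝ))))
      (Metric.closedBall (((n' : ℝ) * α : ℝ) : AddCircle (1 : ℝ)) (a / (δ * (n' : ℝ)))))
    with hbaddef
  rcases bad.eq_empty_or_nonempty with hemp | ⟨n'₀, hn'₀⟩
  · rw [hemp]
    simp only [Finset.card_empty, Nat.cast_zero]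
    positivity
  -- setup
  set R : ℝ := 2 * a / (δ * Q) with hRdef
  have hRpos : 0 < R := by positivity
  set s : ℝ := 1 / (2 * Q') with hsdef
  have hspos : 0 < s := by positivity
  -- every radius of elements of T is ≤ R
  have hrad : ∀ n' ∈ T, 0 < (n' : ℝ) ∧ a / (δ * (n' : ℝ)) ≤ R := by
    intro n' hn'
    obtain ⟨hna, hnb⟩ := hT n' hn'
    have hpos : 0 < (n' : ℝ) := by linarith
    refine ⟨hpos, ?_⟩
    rw [hRdef, div_le_div_iff₀ (by positivity) (by positivity)]
    have h2n : Q ≤ 2 * (n' : ℝ) := by linarith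
    have hmul := mul_le_mul_of_nonneg_left h2n (by positivity : (0:ℝ) ≤ a * δ)
    nlinarith
  -- dist from n-ball center to bad elements is ≤ 2R
  have hdistle : ∀ n' ∈ bad,
      dist (((n : ℝ) * α : ℝ) : AddCircle (1 : ℝ))
        (((n' : ℝ) * α : ℝ) : AddCircle (1 : ℝ)) ≤ 2 * R := by
    intro n' hn'
    rw [hbaddef, Finset.mem_filter] at hn'
    obtain ⟨hn'T, hn'dis⟩ := hn'
    have h1 := dist_le_not_disjoint hn'dis
    have h2 := (hrad n' hn'T).2
    have h3 : a / (δ * (n : ℝ)) ≤ R := hrn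
    linarith
  -- the pair distance implies s ≤ 2R (using the witness)
  have hsR : s ≤ 2 * R := by
    have h1 := hdistle n'₀ hn'₀
    rw [hbaddef, Finset.mem_filter] at hn'₀
    have h2 := dist_sep hα N' hN' n n'₀ (hne n'₀ hn'₀.1) hnlt (hT n'₀ hn'₀.1).2
    rw [hsdef, hQ'def]
    exact h2.trans h1
  -- apply the packing bound
  have hcard : ((bad.card : ℝ)) ≤ (4 * R) / s + 1 := by
    refine card_sep bad (fun (n' : ℕ) => (n' : ℝ) * α - round ((n' : ℝ) * α - (n : ℝ) * α))
      ((n : ℝ) * α - 2 * R) (4 * R) s hspos (by positivity) ?_ ?_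
    · intro n' hn'
      have h1 := hdistle n' hn'
      rw [dist_comm, dist_coe, AddCircle.norm_eq] at h1
      simp only [inv_one, one_mul, mul_one] at h1
      have h2 := abs_le.mp h1
      constructor
      · linarith [h2.1]
      · linarith [h2.2]
    · intro n1 h1 n2 h2 hne12
      have hT1 : n1 ∈ T := Finset.mem_of_mem_filter n1 h1
      have hT2 : n2 ∈ T := Finset.mem_of_mem_filter n2 h2
      have hsep := dist_sep hα N' hN' n1 n2 hne12 (hT n1 hT1).2 (hT n2 hT2).2
      set z : ℤ := round ((n2 : ℝ) * α - (n : ℝ) * α) - round ((n1 : ℝ) * α - (n : ℝ) * α) with hzdef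
      have heq1 : ((n1 : ℝ) * α - round ((n1 : ℝ) * α - (n : ℝ) * α))
          - ((n2 : ℝ) * α - round ((n2 : ℝ) * α - (n : ℝ) * α))
          = ((n1 : ℝ) * α - (n2 : ℝ) * α) - (-z : ℤ) := by
        rw [hzdef]; push_cast; ring
      rw [heq1]
      have hle1 : s ≤ ‖((((n1 : ℝ) * α - (n2 : ℝ) * α : ℝ)) : AddCircle (1 : ℝ))‖ := by
        rw [← dist_coe]; exact hsep
      rw [← coe_sub_int ((n1 : ℝ) * α - (n2 : ℝ) * α) (-z)] at hle1
      exact hle1.trans (norm_le_abs _)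
  -- final computation
  have h1s : 1 ≤ 2 * R / s := (one_le_div hspos).mpr hsR
  have hQ'ne : Q' ≠ 0 := by linarith
  have hsval : 1 / s = 2 * Q' := by rw [hsdef]; field_simp
  calc ((bad.card : ℝ)) ≤ 4 * R / s + 1 := hcard
  _ ≤ 4 * R / s + 2 * R / s := by linarith
  _ = 6 * R * (1 / s) := by ring
  _ = 6 * R * (2 * Q') := by rw [hsval]
  _ = 24 * a * Q' / (δ * Q) := by rw [hRdef]; field_simp; ring

end Sparse


set_option maxHeartbeats 2000000

/-- Proposition 3.3 (sparsification): given `δ > 0`, `0 < a < min{2^{-10}, 2^{-10}δ}`,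
`j ≥ 1` with `1/2 ≤ j·2⁹·a·δ⁻¹ ≤ 1`, `v > 0`, `k ≥ 1`, and finite sets `D̃_i` of integers
in `[q_{k+2i}/2, q_{k+2i})` of cardinality between `(1/8)·v·q_{k+2i}` and `v·q_{k+2i}`,
there are subsets `D_i ⊆ D̃_i` whose associated balls `B(nα, a/(δn))` in `ℝ/ℤ` are pairwise
disjoint and with `#D_i ≥ (1/2)#D̃_i ≥ (1/16)·v·q_{k+2i}`. -/
theorem exists_disjoint_subcollections (α : ℝ) (hα : Irrational α)
    (δ a : ℝ) (hδ : 0 < δ) (ha0 : 0 < a)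
    (ha : a < min ((2 : ℝ) ^ (-10 : ℤ)) ((2 : ℝ) ^ (-10 : ℤ) * δ))
    (j : ℕ) (hj : 1 ≤ j)
    (hj₁ : 1 / 2 ≤ (j : ℝ) * 2 ^ 9 * a * δ⁻¹) (hj₂ : (j : ℝ) * 2 ^ 9 * a * δ⁻¹ ≤ 1)
    (v : ℝ) (hv : 0 < v) (k : ℕ) (hk : 1 ≤ k)
    (Dt : ℕ → Finset ℕ)
    (hDt : ∀ i < j, ∀ n ∈ Dt i,
      qden α (k + 2 * i) / 2 ≤ (n : ℝ) ∧ (n : ℝ) < qden α (k + 2 * i))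
    (hDtcard : ∀ i < j,
      (1 / 8) * v * qden α (k + 2 * i) ≤ ((Dt i).card : ℝ) ∧
      ((Dt i).card : ℝ) ≤ v * qden α (k + 2 * i)) :
    ∃ D : ℕ → Finset ℕ,
      (∀ i < j, D i ⊆ Dt i) ∧
      (∀ i < j, ∀ i' < j, ∀ n ∈ D i, ∀ n' ∈ D i', n ≠ n' →
        Disjoint
          (Metric.closedBall (((n : ℝ) * α : ℝ) : AddCircle (1 : ℝ)) (a / (δ * (n : ℝ))))
          (Metric.closedBall (((n' : ℝ) * α : ℝ) : AddCircle (1 : ℝ)) (a / (δ * (n' : ℝ))))) ∧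
      (∀ i < j,
        (1 / 2) * ((Dt i).card : ℝ) ≤ ((D i).card : ℝ) ∧
        (1 / 16) * v * qden α (k + 2 * i) ≤ ((D i).card : ℝ)) := by
  classical
  unfold qden at hDt hDtcard ⊢
  -- constants
  have ha2 : a < (2 : ℝ) ^ (-10 : ℤ) * δ := lt_of_lt_of_le ha (min_le_right _ _)
  have hpow : ((2 : ℝ) ^ (-10 : ℤ)) = 1 / 1024 := by norm_num
  rw [hpow] at ha2
  have ha8 : 8 * a < δ := by nlinarith
  have hja : (j : ℝ) * a ≤ δ / 512 := by
    rw [← div_eq_mul_inv] at hj₂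
    have h1 := (div_le_one hδ).mp hj₂
    norm_num at h1
    linarith
  -- basic facts about the qden values
  have hQ1 : ∀ i : ℕ, (1 : ℝ) ≤ (GenContFract.of α).dens (k + 2 * i) := fun i => Sparse.one_le_dens _
  have hQpos : ∀ i : ℕ, (0 : ℝ) < (GenContFract.of α).dens (k + 2 * i) := fun i =>
    lt_of_lt_of_le one_pos (hQ1 i)
  have hNge : ∀ i : ℕ, 1 ≤ k + 2 * i := fun i => by omega
  have hQmono : ∀ i i' : ℕ, i ≤ i' → (GenContFract.of α).dens (k + 2 * i) ≤ (GenContFract.of α).dens (k + 2 * i') :=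
    fun i i' h => Sparse.dens_mono (by omega)
  have hQdouble : ∀ i i' : ℕ, i < i' → 2 * (GenContFract.of α).dens (k + 2 * i) ≤ (GenContFract.of α).dens (k + 2 * i') := by
    intro i i' h
    have h1 := Sparse.two_dens_le hα (k + 2 * i)
    have h2 : (GenContFract.of α).dens (k + 2 * i + 2) ≤ (GenContFract.of α).dens (k + 2 * i') :=
      Sparse.dens_mono (by omega)
    exact le_trans h1 h2
  -- facts about elements
  have helem : ∀ i < j, ∀ n ∈ Dt i, (0 : ℝ) < (n : ℝ) := by
    intro i hi n hn
    have h1 := (hDt i hi n hn).1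
    have := hQ1 i
    linarith
  have hrad : ∀ i < j, ∀ n ∈ Dt i,
      a / (δ * (n : ℝ)) ≤ 2 * a / (δ * (GenContFract.of α).dens (k + 2 * i)) := by
    intro i hi n hn
    have h1 := (hDt i hi n hn).1
    have h2 := hQ1 i
    have h3 := helem i hi n hn
    rw [div_le_div_iff₀ (by positivity) (by positivity)]
    have h2n : (GenContFract.of α).dens (k + 2 * i) ≤ 2 * (n : ℝ) := by linarith
    have hmul := mul_le_mul_of_nonneg_left h2n (by positivity : (0 : ℝ) ≤ a * δ)
    nlinarith
  -- within-block disjointness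
  have hwithin : ∀ i < j, ∀ n ∈ Dt i, ∀ n' ∈ Dt i, n ≠ n' →
      Disjoint
        (Metric.closedBall (((n : ℝ) * α : ℝ) : AddCircle (1 : ℝ)) (a / (δ * (n : ℝ))))
        (Metric.closedBall (((n' : ℝ) * α : ℝ) : AddCircle (1 : ℝ)) (a / (δ * (n' : ℝ)))) := by
    intro i hi n hn n' hn' hne
    apply Metric.closedBall_disjoint_closedBall
    have hd := Sparse.dist_sep hα (k + 2 * i) (hNge i) n n' hne (hDt i hi n hn).2 (hDt i hi n' hn').2
    have hr1 := hrad i hi n hn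
    have hr2 := hrad i hi n' hn'
    have h8 : 4 * a / (δ * (GenContFract.of α).dens (k + 2 * i))
        < 1 / (2 * (GenContFract.of α).dens (k + 2 * i)) := by
      rw [div_lt_div_iff₀ (mul_pos hδ (hQpos i)) (by nlinarith [hQpos i])]
      nlinarith [hQpos i]
    calc a / (δ * (n : ℝ)) + a / (δ * (n' : ℝ))
        ≤ 2 * a / (δ * (GenContFract.of α).dens (k + 2 * i))
          + 2 * a / (δ * (GenContFract.of α).dens (k + 2 * i)) := add_le_add hr1 hr2
    _ = 4 * a / (δ * (GenContFract.of α).dens (k + 2 * i)) := by ring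
    _ < 1 / (2 * (GenContFract.of α).dens (k + 2 * i)) := h8
    _ ≤ _ := hd
  -- cross-block: n < n'
  have hcross : ∀ i < j, ∀ i', i < i' → i' < j → ∀ n ∈ Dt i, ∀ n' ∈ Dt i', n ≠ n' := by
    intro i hi i' hii' hi' n hn n' hn'
    have h1 : (n : ℝ) < (GenContFract.of α).dens (k + 2 * i) := (hDt i hi n hn).2
    have h2 : (GenContFract.of α).dens (k + 2 * i') / 2 ≤ (n' : ℝ) := (hDt i' hi' n' hn').1
    have h3 := hQdouble i i' hii'
    intro heq
    rw [heq] at h1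
    linarith
  -- the subsets
  refine ⟨fun i' => (Dt i').filter (fun (n' : ℕ) => ∀ i ∈ Finset.range i', ∀ n ∈ Dt i,
      Disjoint
        (Metric.closedBall (((n : ℝ) * α : ℝ) : AddCircle (1 : ℝ)) (a / (δ * (n : ℝ))))
        (Metric.closedBall (((n' : ℝ) * α : ℝ) : AddCircle (1 : ℝ)) (a / (δ * (n' : ℝ))))),
    ?_, ?_, ?_⟩
  · intro i _
    exact Finset.filter_subset _ _
  · intro i hi i' hi' n hn n' hn' hne
    rcases lt_trichotomy i i' with hlt | heq | hgt
    · exact (Finset.mem_filter.mp hn').2 i (Finset.mem_range.mpr hlt) n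
        (Finset.filter_subset _ _ hn)
    · subst heq
      exact hwithin i hi n (Finset.filter_subset _ _ hn) n' (Finset.filter_subset _ _ hn') hne
    · exact ((Finset.mem_filter.mp hn).2 i' (Finset.mem_range.mpr hgt) n'
        (Finset.filter_subset _ _ hn')).symm
  · intro i' hi'
    set Rem := (Dt i').filter (fun (n' : ℕ) => ¬ ∀ i ∈ Finset.range i', ∀ n ∈ Dt i,
      Disjoint
        (Metric.closedBall (((n : ℝ) * α : ℝ) : AddCircle (1 : ℝ)) (a / (δ * (n : ℝ))))
        (Metric.closedBall (((n' : ℝ) * α : ℝ) : AddCircle (1 : ℝ)) (a / (δ * (n' : ℝ)))))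
      with hRemdef
    have hsplit : ((Dt i').filter (fun (n' : ℕ) => ∀ i ∈ Finset.range i', ∀ n ∈ Dt i,
        Disjoint
          (Metric.closedBall (((n : ℝ) * α : ℝ) : AddCircle (1 : ℝ)) (a / (δ * (n : ℝ))))
          (Metric.closedBall (((n' : ℝ) * α : ℝ) : AddCircle (1 : ℝ)) (a / (δ * (n' : ℝ)))))).card
        + Rem.card = (Dt i').card := by
      rw [hRemdef]
      exact Finset.card_filter_add_card_filter_not _
    -- bound the removed part
    have hRem : ((Rem.card : ℝ)) ≤ (3 / 64) * v * (GenContFract.of α).dens (k + 2 * i') := by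
      have hsub : Rem ⊆ (Finset.range i').biUnion (fun i => (Dt i).biUnion (fun n =>
          (Dt i').filter (fun (n' : ℕ) => ¬ Disjoint
            (Metric.closedBall (((n : ℝ) * α : ℝ) : AddCircle (1 : ℝ)) (a / (δ * (n : ℝ))))
            (Metric.closedBall (((n' : ℝ) * α : ℝ) : AddCircle (1 : ℝ)) (a / (δ * (n' : ℝ))))))) := by
        intro n' hn'
        rw [hRemdef, Finset.mem_filter] at hn'
        obtain ⟨hT, hprop⟩ := hn'
        push_neg at hprop
        obtain ⟨i, hi, n, hn, hdis⟩ := hprop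
        rw [Finset.mem_biUnion]
        exact ⟨i, hi, Finset.mem_biUnion.mpr ⟨n, hn, Finset.mem_filter.mpr ⟨hT, hdis⟩⟩⟩
      have h2 : Rem.card ≤ ∑ i ∈ Finset.range i', ∑ n ∈ Dt i,
          ((Dt i').filter (fun (n' : ℕ) => ¬ Disjoint
            (Metric.closedBall (((n : ℝ) * α : ℝ) : AddCircle (1 : ℝ)) (a / (δ * (n : ℝ))))
            (Metric.closedBall (((n' : ℝ) * α : ℝ) : AddCircle (1 : ℝ)) (a / (δ * (n' : ℝ)))))).card := by
        refine (Finset.card_le_card hsub).trans ?_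
        refine (Finset.card_biUnion_le).trans ?_
        exact Finset.sum_le_sum (fun i _ => Finset.card_biUnion_le)
      have h3 : ((Rem.card : ℝ)) ≤ ∑ i ∈ Finset.range i', ∑ n ∈ Dt i,
          (24 * a * (GenContFract.of α).dens (k + 2 * i') / (δ * (GenContFract.of α).dens (k + 2 * i))) := by
        calc ((Rem.card : ℝ)) ≤ ((∑ i ∈ Finset.range i', ∑ n ∈ Dt i,
            ((Dt i').filter (fun (n' : ℕ) => ¬ Disjoint
              (Metric.closedBall (((n : ℝ) * α : ℝ) : AddCircle (1 : ℝ)) (a / (δ * (n : ℝ))))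
              (Metric.closedBall (((n' : ℝ) * α : ℝ) : AddCircle (1 : ℝ))
                (a / (δ * (n' : ℝ)))))).card : ℕ) : ℝ) := by exact_mod_cast h2
        _ ≤ _ := by
          push_cast
          refine Finset.sum_le_sum (fun i hi => Finset.sum_le_sum (fun n hn => ?_))
          have hii' : i < i' := Finset.mem_range.mp hi
          have hij : i < j := lt_trans hii' hi'
          refine Sparse.bad_count hα a δ hδ ha0 (k + 2 * i) (k + 2 * i') (hNge i) (hNge i')
            (hQmono i i' (le_of_lt hii')) n (ne_of_gt (helem i hij n hn))
            (hrad i hij n hn) ?_ (Dt i') (hDt i' hi') ?_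
          · have h1 : (n : ℝ) < (GenContFract.of α).dens (k + 2 * i) := (hDt i hij n hn).2
            have := hQmono i i' (le_of_lt hii')
            linarith
          · intro n' hn'
            exact hcross i hij i' hii' hi' n hn n' hn'
      have h4 : ∑ i ∈ Finset.range i', ∑ n ∈ Dt i,
          (24 * a * (GenContFract.of α).dens (k + 2 * i') / (δ * (GenContFract.of α).dens (k + 2 * i)))
          ≤ ∑ i ∈ Finset.range i', (24 * a * v * (GenContFract.of α).dens (k + 2 * i') / δ) := by
        refine Finset.sum_le_sum (fun i hi => ?_)
        have hii' : i < i' := Finset.mem_range.mp hi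
        have hij : i < j := lt_trans hii' hi'
        rw [Finset.sum_const, nsmul_eq_mul]
        have hcd := (hDtcard i hij).2
        have hfac : (0 : ℝ) ≤ 24 * a * (GenContFract.of α).dens (k + 2 * i') / (δ * (GenContFract.of α).dens (k + 2 * i)) := by
          apply div_nonneg
          · nlinarith [mul_pos ha0 (hQpos i')]
          · nlinarith [hQpos i]
        calc ((Dt i).card : ℝ) * (24 * a * (GenContFract.of α).dens (k + 2 * i') / (δ * (GenContFract.of α).dens (k + 2 * i)))
            ≤ (v * (GenContFract.of α).dens (k + 2 * i)) * (24 * a * (GenContFract.of α).dens (k + 2 * i') / (δ * (GenContFract.of α).dens (k + 2 * i)))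
              := mul_le_mul_of_nonneg_right hcd hfac
        _ = 24 * a * v * (GenContFract.of α).dens (k + 2 * i') / δ := by
            have h0 := hQpos i
            field_simp
      have h5 : ∑ i ∈ Finset.range i', (24 * a * v * (GenContFract.of α).dens (k + 2 * i') / δ)
          = (i' : ℝ) * (24 * a * v * (GenContFract.of α).dens (k + 2 * i') / δ) := by
        rw [Finset.sum_const, Finset.card_range, nsmul_eq_mul]
      have h6 : (i' : ℝ) * (24 * a * v * (GenContFract.of α).dens (k + 2 * i') / δ)
          ≤ (3 / 64) * v * (GenContFract.of α).dens (k + 2 * i') := by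
        have hij : (i' : ℝ) ≤ (j : ℝ) := by exact_mod_cast le_of_lt hi'
        have hQp := hQpos i'
        have h24 : (0 : ℝ) < 24 * a * v * (GenContFract.of α).dens (k + 2 * i') :=
          by nlinarith [mul_pos (mul_pos ha0 hv) hQp]
        have hb1 : (i' : ℝ) * (24 * a * v * (GenContFract.of α).dens (k + 2 * i') / δ)
            ≤ (j : ℝ) * (24 * a * v * (GenContFract.of α).dens (k + 2 * i') / δ) :=
          mul_le_mul_of_nonneg_right hij (le_of_lt (div_pos h24 hδ))
        have hb2 : (j : ℝ) * (24 * a * v * (GenContFract.of α).dens (k + 2 * i') / δ)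
            = 24 * ((j : ℝ) * a) * v * (GenContFract.of α).dens (k + 2 * i') / δ := by ring
        have hb3 : 24 * ((j : ℝ) * a) * v * (GenContFract.of α).dens (k + 2 * i') / δ
            ≤ 24 * (δ / 512) * v * (GenContFract.of α).dens (k + 2 * i') / δ := by
          have hnum : 24 * ((j : ℝ) * a) * v * (GenContFract.of α).dens (k + 2 * i')
              ≤ 24 * (δ / 512) * v * (GenContFract.of α).dens (k + 2 * i') := by
            nlinarith [mul_le_mul_of_nonneg_right hja (le_of_lt (mul_pos hv hQp))]
          exact (div_le_div_iff_of_pos_right hδ).mpr hnum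
        have hb4 : 24 * (δ / 512) * v * (GenContFract.of α).dens (k + 2 * i') / δ
            = (3 / 64) * v * (GenContFract.of α).dens (k + 2 * i') := by
          field_simp
          ring
        linarith
      calc ((Rem.card : ℝ)) ≤ ∑ i ∈ Finset.range i', ∑ n ∈ Dt i,
          (24 * a * (GenContFract.of α).dens (k + 2 * i') / (δ * (GenContFract.of α).dens (k + 2 * i))) := h3
      _ ≤ ∑ i ∈ Finset.range i', (24 * a * v * (GenContFract.of α).dens (k + 2 * i') / δ) := h4
      _ = (i' : ℝ) * (24 * a * v * (GenContFract.of α).dens (k + 2 * i') / δ) := h5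
      _ ≤ (3 / 64) * v * (GenContFract.of α).dens (k + 2 * i') := h6
    -- conclude the cardinality bounds
    have hsubsplit : Dt i' ⊆ ((Dt i').filter (fun (n' : ℕ) => ∀ i ∈ Finset.range i', ∀ n ∈ Dt i,
        Disjoint
          (Metric.closedBall (((n : ℝ) * α : ℝ) : AddCircle (1 : ℝ)) (a / (δ * (n : ℝ))))
          (Metric.closedBall (((n' : ℝ) * α : ℝ) : AddCircle (1 : ℝ)) (a / (δ * (n' : ℝ))))))
        ∪ Rem := by
      intro x hx
      by_cases hcase : ∀ i ∈ Finset.range i', ∀ n ∈ Dt i,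
        Disjoint
          (Metric.closedBall (((n : ℝ) * α : ℝ) : AddCircle (1 : ℝ)) (a / (δ * (n : ℝ))))
          (Metric.closedBall (((x : ℝ) * α : ℝ) : AddCircle (1 : ℝ)) (a / (δ * (x : ℝ))))
      · exact Finset.mem_union_left _ (Finset.mem_filter.mpr ⟨hx, hcase⟩)
      · exact Finset.mem_union_right _ (by rw [hRemdef]; exact Finset.mem_filter.mpr ⟨hx, hcase⟩)
    have hcardsplit : (Dt i').card ≤ ((Dt i').filter (fun (n' : ℕ) => ∀ i ∈ Finset.range i',
        ∀ n ∈ Dt i,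
        Disjoint
          (Metric.closedBall (((n : ℝ) * α : ℝ) : AddCircle (1 : ℝ)) (a / (δ * (n : ℝ))))
          (Metric.closedBall (((n' : ℝ) * α : ℝ) : AddCircle (1 : ℝ))
            (a / (δ * (n' : ℝ)))))).card + Rem.card :=
      le_trans (Finset.card_le_card hsubsplit) (Finset.card_union_le _ _)
    have hcardsplitR : ((Dt i').card : ℝ) ≤ (((Dt i').filter (fun (n' : ℕ) =>
        ∀ i ∈ Finset.range i', ∀ n ∈ Dt i,
        Disjoint
          (Metric.closedBall (((n : ℝ) * α : ℝ) : AddCircle (1 : ℝ)) (a / (δ * (n : ℝ))))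
          (Metric.closedBall (((n' : ℝ) * α : ℝ) : AddCircle (1 : ℝ))
            (a / (δ * (n' : ℝ)))))).card : ℝ) + (Rem.card : ℝ) := by
      exact_mod_cast hcardsplit
    have hlow := (hDtcard i' hi').1
    have hvQ : (0 : ℝ) < v * (GenContFract.of α).dens (k + 2 * i') := mul_pos hv (hQpos i')
    constructor
    · linarith
    · linarith
end

section
/- Let Σ ⊂ ℝ be a compact set and let 𝒩 : ℝ → ℝ be a continuous non-decreasing function with 𝒩(Σ) = [0,1] which is locally constant on ℝ \ Σ, and suppose there exists 0 < c < 1 such that for every E ∈ Σ and every 0 < ε < 1 one has c·ε^{3/2} ≤ 𝒩(E+ε) − 𝒩(E−ε) ≤ c^{−1}·ε^{1/2}. Let D ⊆ [0,1] and set F = Σ ∩ 𝒩^{−1}(D). Then for every s > 0, 3^{−s}·ℋ^{ω_s}(D) ≤ ℋ^{ω_s}(F) ≤ 3^{s+1}·ℋ^{ω_s}(D). -/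
open Filter MeasureTheory Set
open scoped ENNReal NNReal Classical

lemma omega_key {s p K d ℓ : ℝ} (hs : 0 < s) (hp : 1/2 ≤ p) (hK : 1 ≤ K)
    (hd0 : 0 < d) (hd : Real.log d ≤ -(6 * Real.log K + 6))
    (hl0 : 0 < ℓ) (hl : ℓ ≤ K * d ^ p) :
    omegaS s ℓ ≤ 3 ^ s * omegaS s d := by
  have hK0 : (0:ℝ) < K := lt_of_lt_of_le one_pos hK
  have hlogK : 0 ≤ Real.log K := Real.log_nonneg hK
  have hL6 : 6 * Real.log K + 6 ≤ -Real.log d := by linarith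
  have hLpos : 0 < -Real.log d := by linarith
  have hdp : (0:ℝ) < d ^ p := Real.rpow_pos_of_pos hd0 p
  have hlog1 : Real.log ℓ ≤ Real.log K + p * Real.log d := by
    have h := Real.log_le_log hl0 hl
    rwa [Real.log_mul (ne_of_gt hK0) (ne_of_gt hdp), Real.log_rpow hd0] at h
  have h3 : -Real.log d / 3 ≤ -Real.log ℓ := by
    nlinarith [mul_nonneg (sub_nonneg.2 hp) hLpos.le]
  have hL3 : 0 < -Real.log d / 3 := by linarith
  have hlneg : 0 < -Real.log ℓ := lt_of_lt_of_le hL3 h3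
  rw [omegaS, omegaS, if_pos hl0, if_pos hd0]
  have anti : (-Real.log ℓ) ^ (-s) ≤ (-Real.log d / 3) ^ (-s) := by
    rw [Real.rpow_neg hlneg.le, Real.rpow_neg hL3.le]
    exact inv_anti₀ (Real.rpow_pos_of_pos hL3 s) (Real.rpow_le_rpow hL3.le h3 hs.le)
  refine anti.trans (le_of_eq ?_)
  rw [Real.div_rpow hLpos.le (by norm_num : (0:ℝ) ≤ 3),
    Real.rpow_neg (by norm_num : (0:ℝ) ≤ 3)]
  rw [div_eq_mul_inv, inv_inv]; ring

lemma transfer (ω : ℝ → ℝ) (S T : Set ℝ) (C : ℝ≥0∞) (hC0 : C ≠ 0) (hCt : C ≠ ⊤)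
    (h : ∀ δ : ℝ, 0 < δ → ∃ ε : ℝ, 0 < ε ∧ ∀ (a b : ℕ → ℝ),
      S ⊆ ⋃ i, Set.Ioo (a i) (b i) → (∀ i, a i ≤ b i ∧ b i - a i ≤ ε) →
      ∃ (a' b' : ℕ → ℝ), (T ⊆ ⋃ i, Set.Ioo (a' i) (b' i)) ∧
        (∀ i, a' i ≤ b' i ∧ b' i - a' i ≤ δ) ∧
        ∑' i, ENNReal.ofReal (ω (b' i - a' i)) ≤ C * ∑' i, ENNReal.ofReal (ω (b i - a i))) :
    (⨆ (ε : ℝ) (_ : 0 < ε), ⨅ (a : ℕ → ℝ) (b : ℕ → ℝ)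
        (_ : T ⊆ ⋃ i, Set.Ioo (a i) (b i)) (_ : ∀ i, a i ≤ b i ∧ b i - a i ≤ ε),
        ∑' i, ENNReal.ofReal (ω (b i - a i)))
      ≤ C * ⨆ (ε : ℝ) (_ : 0 < ε), ⨅ (a : ℕ → ℝ) (b : ℕ → ℝ)
        (_ : S ⊆ ⋃ i, Set.Ioo (a i) (b i)) (_ : ∀ i, a i ≤ b i ∧ b i - a i ≤ ε),
        ∑' i, ENNReal.ofReal (ω (b i - a i)) := by
  refine iSup_le fun δ => iSup_le fun hδ => ?_
  obtain ⟨ε, hε, H⟩ := h δ hδ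
  have step : (⨅ (a : ℕ → ℝ) (b : ℕ → ℝ)
        (_ : T ⊆ ⋃ i, Set.Ioo (a i) (b i)) (_ : ∀ i, a i ≤ b i ∧ b i - a i ≤ δ),
        ∑' i, ENNReal.ofReal (ω (b i - a i)))
      ≤ C * ⨅ (a : ℕ → ℝ) (b : ℕ → ℝ)
        (_ : S ⊆ ⋃ i, Set.Ioo (a i) (b i)) (_ : ∀ i, a i ≤ b i ∧ b i - a i ≤ ε),
        ∑' i, ENNReal.ofReal (ω (b i - a i)) := by
    simp only [ENNReal.mul_iInf_of_ne hC0 hCt]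
    refine le_iInf fun a => le_iInf fun b => le_iInf fun hcov => le_iInf fun hlen => ?_
    obtain ⟨a', b', hcov', hlen', hcost⟩ := H a b hcov hlen
    exact le_trans (iInf_le_of_le a' <| iInf_le_of_le b' <| iInf₂_le hcov' hlen') hcost
  refine step.trans (mul_le_mul_right ?_ C)
  exact le_iSup₂_of_le ε hε le_rfl

lemma part1 (Spec : Set ℝ) (N : ℝ → ℝ) (hNmono : Monotone N)
    (hNsurj : N '' Spec = Set.Icc (0 : ℝ) 1)
    (c : ℝ) (hc0 : 0 < c) (hc1 : c < 1)
    (hreg : ∀ E ∈ Spec, ∀ ε : ℝ, 0 < ε → ε < 1 →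
      c * ε ^ (3 / 2 : ℝ) ≤ N (E + ε) - N (E - ε) ∧
      N (E + ε) - N (E - ε) ≤ c⁻¹ * ε ^ (1 / 2 : ℝ))
    (D : Set ℝ) (hD : D ⊆ Set.Icc (0 : ℝ) 1) (s : ℝ) (hs : 0 < s)
    (δ : ℝ) (hδ : 0 < δ) :
    ∃ ε : ℝ, 0 < ε ∧ ∀ (a b : ℕ → ℝ),
      (Spec ∩ N ⁻¹' D) ⊆ ⋃ i, Set.Ioo (a i) (b i) →
      (∀ i, a i ≤ b i ∧ b i - a i ≤ ε) →
      ∃ (a' b' : ℕ → ℝ), (D ⊆ ⋃ i, Set.Ioo (a' i) (b' i)) ∧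
        (∀ i, a' i ≤ b' i ∧ b' i - a' i ≤ δ) ∧
        ∑' i, ENNReal.ofReal (omegaS s (b' i - a' i)) ≤
          ENNReal.ofReal ((3:ℝ) ^ s) * ∑' i, ENNReal.ofReal (omegaS s (b i - a i)) := by
  classical
  set K : ℝ := 4 / c with hKdef
  have hK0 : 0 < K := by positivity
  have hK1 : 1 ≤ K := by
    rw [hKdef, le_div_iff₀ hc0]; linarith
  refine ⟨min ((δ / K) ^ (2:ℝ)) (Real.exp (-(6 * Real.log K + 6))), ?_, ?_⟩
  · have : (0:ℝ) < (δ / K) ^ (2:ℝ) := Real.rpow_pos_of_pos (by positivity) _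
    exact lt_min this (Real.exp_pos _)
  intro a b hcov hlen
  set r : ℕ → ℝ := fun i => (2 / c) * (b i - a i) ^ (1/2 : ℝ) with hrdef
  set P : ℕ → Prop := fun i => (Spec ∩ Set.Ioo (a i) (b i)).Nonempty with hPdef
  refine ⟨fun i => if h : P i then N h.choose - r i else 0,
          fun i => if h : P i then N h.choose + r i else 0, ?_, ?_, ?_⟩
  · -- coverage of D
    intro x hx
    have hx01 : x ∈ Set.Icc (0:ℝ) 1 := hD hx
    rw [← hNsurj] at hx01
    obtain ⟨E', hE'S, hE'x⟩ := hx01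
    have hE'F : E' ∈ Spec ∩ N ⁻¹' D := ⟨hE'S, by simp [Set.mem_preimage, hE'x, hx]⟩
    obtain ⟨i, hi⟩ := Set.mem_iUnion.1 (hcov hE'F)
    have hPi : P i := ⟨E', hE'S, hi⟩
    have hE := hPi.choose_spec
    set Ei := hPi.choose with hEidef
    have hl0 : 0 < b i - a i := by
      have := hE.2; simp only [Set.mem_Ioo] at this; linarith [this.1, this.2]
    have hl1 : b i - a i < 1 := by
      have h1 := (hlen i).2
      have h2 : Real.exp (-(6 * Real.log K + 6)) < 1 := by
        apply Real.exp_lt_one_iff.2  -- maybe name wrong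
        have := Real.log_nonneg hK1; linarith
      calc b i - a i ≤ _ := h1
        _ ≤ Real.exp (-(6 * Real.log K + 6)) := min_le_right _ _
        _ < 1 := h2
    have hR := hreg Ei hE.1 (b i - a i) hl0 hl1
    -- N b i ≤ N (Ei + ℓ), N (Ei - ℓ) ≤ N (a i)
    have hEab : a i < Ei ∧ Ei < b i := by
      have := hE.2; simpa [Set.mem_Ioo] using this
    have hb : N (b i) ≤ N (Ei + (b i - a i)) := hNmono (by linarith [hEab.1])
    have ha : N (Ei - (b i - a i)) ≤ N (a i) := hNmono (by linarith [hEab.2])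
    have hNab : N (b i) - N (a i) ≤ c⁻¹ * (b i - a i) ^ (1/2 : ℝ) := by
      linarith [hR.2]
    have hrpos : 0 < (b i - a i) ^ (1/2 : ℝ) := Real.rpow_pos_of_pos hl0 _
    have hri : r i = 2 / c * (b i - a i) ^ (1/2 : ℝ) := rfl
    have hstrict : c⁻¹ * (b i - a i) ^ (1/2 : ℝ) < r i := by
      rw [hri]
      have h2c : c⁻¹ < 2 / c := by
        rw [inv_eq_one_div, div_lt_div_iff₀ hc0 hc0]; nlinarith
      exact mul_lt_mul_of_pos_right h2c hrpos
    -- x and N Ei lie in [N a i, N b i]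
    have hx1 : N (a i) ≤ x := by rw [← hE'x]; exact hNmono hi.1.le
    have hx2 : x ≤ N (b i) := by rw [← hE'x]; exact hNmono hi.2.le
    have hy1 : N (a i) ≤ N Ei := hNmono hEab.1.le
    have hy2 : N Ei ≤ N (b i) := hNmono hEab.2.le
    refine Set.mem_iUnion.2 ⟨i, ?_⟩
    simp only [dif_pos hPi, Set.mem_Ioo]
    constructor <;> [skip; skip] <;> linarith
  · -- lengths
    intro i
    by_cases hPi : P i
    · simp only [dif_pos hPi]
      have hE := hPi.choose_spec
      have hl0 : 0 < b i - a i := by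
        have := hE.2; simp only [Set.mem_Ioo] at this; linarith [this.1, this.2]
      have hri : r i = 2 / c * (b i - a i) ^ (1/2 : ℝ) := rfl
      have hrnn : 0 ≤ r i := by
        rw [hri]; positivity
      constructor
      · linarith
      · have h1 := (hlen i).2
        have hεδ : (b i - a i) ^ (1/2:ℝ) ≤ δ / K := by
          have h2 : b i - a i ≤ (δ / K) ^ (2:ℝ) := le_trans h1 (min_le_left _ _)
          calc (b i - a i) ^ (1/2:ℝ) ≤ ((δ / K) ^ (2:ℝ)) ^ (1/2:ℝ) :=
                Real.rpow_le_rpow hl0.le h2 (by norm_num)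
            _ = δ / K := by
                rw [← Real.rpow_mul (by positivity : (0:ℝ) ≤ δ / K)]
                norm_num
        have : (N hPi.choose + r i) - (N hPi.choose - r i) = K * (b i - a i) ^ (1/2:ℝ) := by
          rw [hri, hKdef]; ring
        rw [this]
        calc K * (b i - a i) ^ (1/2:ℝ) ≤ K * (δ / K) := by
              exact mul_le_mul_of_nonneg_left hεδ hK0.le
          _ = δ := by field_simp
    · simp only [dif_neg hPi]
      constructor <;> simp [hδ.le]
  · -- cost
    rw [← ENNReal.tsum_mul_left]
    refine ENNReal.tsum_le_tsum fun i => ?_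
    rw [← ENNReal.ofReal_mul (Real.rpow_nonneg (by norm_num : (0:ℝ) ≤ 3) s)]
    by_cases hPi : P i
    · simp only [dif_pos hPi]
      have hE := hPi.choose_spec
      have hl0 : 0 < b i - a i := by
        have := hE.2; simp only [Set.mem_Ioo] at this; linarith [this.1, this.2]
      have hri : r i = 2 / c * (b i - a i) ^ (1/2 : ℝ) := rfl
      have hlen2 : (N hPi.choose + r i) - (N hPi.choose - r i) = K * (b i - a i) ^ (1/2:ℝ) := by
        rw [hri, hKdef]; ring
      rw [hlen2]
      refine ENNReal.ofReal_le_ofReal ?_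
      refine omega_key hs (by norm_num) hK1 hl0 ?_ (by positivity) le_rfl
      have h1 : b i - a i ≤ Real.exp (-(6 * Real.log K + 6)) :=
        le_trans (hlen i).2 (min_le_right _ _)
      calc Real.log (b i - a i) ≤ Real.log (Real.exp (-(6 * Real.log K + 6))) :=
            Real.log_le_log hl0 h1
        _ = -(6 * Real.log K + 6) := Real.log_exp _
    · simp only [dif_neg hPi]
      simp [omegaS]

lemma part2 (Spec : Set ℝ) (hSpec : IsCompact Spec) (N : ℝ → ℝ) (hNmono : Monotone N)
    (c : ℝ) (hc0 : 0 < c) (hc1 : c < 1)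
    (hreg : ∀ E ∈ Spec, ∀ ε : ℝ, 0 < ε → ε < 1 →
      c * ε ^ (3 / 2 : ℝ) ≤ N (E + ε) - N (E - ε) ∧
      N (E + ε) - N (E - ε) ≤ c⁻¹ * ε ^ (1 / 2 : ℝ))
    (D : Set ℝ) (s : ℝ) (hs : 0 < s)
    (δ : ℝ) (hδ : 0 < δ) :
    ∃ ε : ℝ, 0 < ε ∧ ∀ (a b : ℕ → ℝ),
      D ⊆ ⋃ i, Set.Ioo (a i) (b i) →
      (∀ i, a i ≤ b i ∧ b i - a i ≤ ε) →
      ∃ (a' b' : ℕ → ℝ), ((Spec ∩ N ⁻¹' D) ⊆ ⋃ i, Set.Ioo (a' i) (b' i)) ∧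
        (∀ i, a' i ≤ b' i ∧ b' i - a' i ≤ δ) ∧
        ∑' i, ENNReal.ofReal (omegaS s (b' i - a' i)) ≤
          ENNReal.ofReal ((3:ℝ) ^ (s+1)) * ∑' i, ENNReal.ofReal (omegaS s (b i - a i)) := by
  classical
  have hc23 : (0:ℝ) < c ^ ((2:ℝ)/3) := Real.rpow_pos_of_pos hc0 _
  set K : ℝ := 3 / c ^ ((2:ℝ)/3) with hKdef
  have hK0 : 0 < K := by positivity
  have hK1 : 1 ≤ K := by
    rw [hKdef, le_div_iff₀ hc23]
    have : c ^ ((2:ℝ)/3) ≤ 1 := Real.rpow_le_one hc0.le hc1.le (by norm_num)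
    linarith
  refine ⟨min ((δ / K) ^ ((3:ℝ)/2)) (min (Real.exp (-(6 * Real.log K + 6))) (c/8)), ?_, ?_⟩
  · refine lt_min (Real.rpow_pos_of_pos (by positivity) _) (lt_min (Real.exp_pos _) (by positivity))
  intro a b hcov hlen
  set G : ℕ → Set ℝ := fun i => Spec ∩ N ⁻¹' (Set.Ioo (a i) (b i)) with hGdef
  set ρ : ℕ → ℝ := fun i => ((b i - a i) / c) ^ ((2:ℝ)/3) with hρdef
  -- the geometric claim
  have claim : ∀ i, ∀ x ∈ G i,
      x ∈ Set.Ioo (sInf (G i) - ρ i) (sInf (G i) + 2 * ρ i) ∪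
          Set.Ioo (sSup (G i) - 2 * ρ i) (sSup (G i) + ρ i) := by
    intro i x hx
    have hPi : (G i).Nonempty := ⟨x, hx⟩
    have hxS : x ∈ Spec := hx.1
    have hxN : N x ∈ Set.Ioo (a i) (b i) := hx.2
    have hd0 : 0 < b i - a i := by
      have := hxN; simp only [Set.mem_Ioo] at this; linarith [this.1, this.2]
    have hρi : ρ i = ((b i - a i) / c) ^ ((2:ℝ)/3) := rfl
    have hρ0 : 0 < ρ i := by rw [hρi]; positivity
    have hbdd : BddBelow (G i) := hSpec.bddBelow.mono Set.inter_subset_left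
    have hbdd' : BddAbove (G i) := hSpec.bddAbove.mono Set.inter_subset_left
    have hxL : sInf (G i) ≤ x := csInf_le hbdd hx
    have hxR : x ≤ sSup (G i) := le_csSup hbdd' hx
    have main : x - sInf (G i) ≤ ρ i ∨ sSup (G i) - x ≤ ρ i := by
      by_contra hcon
      push_neg at hcon
      obtain ⟨h1, h2⟩ := hcon
      obtain ⟨E, hEG, hEx⟩ : ∃ E ∈ G i, E < x - ρ i :=
        exists_lt_of_csInf_lt hPi (by linarith)
      obtain ⟨E', hE'G, hE'x⟩ : ∃ E' ∈ G i, x + ρ i < E' :=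
        exists_lt_of_lt_csSup hPi (by linarith)
      set ε₀ : ℝ := min (x - E) (E' - x) with hε₀def
      have hε₀ρ : ρ i < ε₀ := lt_min (by linarith) (by linarith)
      have hε₀pos : 0 < ε₀ := lt_trans hρ0 hε₀ρ
      have hup : x + ε₀ ≤ E' := by
        have := min_le_right (x - E) (E' - x); simp only [← hε₀def] at this; linarith
      have hdown : E ≤ x - ε₀ := by
        have := min_le_left (x - E) (E' - x); simp only [← hε₀def] at this; linarith
      have hNE : a i < N E := hEG.2.1
      have hNE' : N E' < b i := hE'G.2.2
      rcases lt_or_ge ε₀ 1 with hcase | hcase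
      · have hr := (hreg x hxS ε₀ hε₀pos hcase).1
        have hub : N (x + ε₀) ≤ N E' := hNmono hup
        have hlb : N E ≤ N (x - ε₀) := hNmono hdown
        have hlt : c * ε₀ ^ ((3:ℝ)/2) < b i - a i := by linarith
        have hεlt : ε₀ < ρ i := by
          have hdc : ε₀ ^ ((3:ℝ)/2) < (b i - a i) / c := by
            rw [lt_div_iff₀ hc0]; linarith
          have : (ε₀ ^ ((3:ℝ)/2)) ^ ((2:ℝ)/3) < ((b i - a i) / c) ^ ((2:ℝ)/3) :=
            Real.rpow_lt_rpow (Real.rpow_nonneg hε₀pos.le _) hdc (by norm_num)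
          rw [← Real.rpow_mul hε₀pos.le] at this
          norm_num at this
          rw [hρi]; exact this
        linarith
      · have hr := (hreg x hxS (1/2) (by norm_num) (by norm_num)).1
        have hub : N (x + 1/2) ≤ N E' := hNmono (by linarith)
        have hlb : N E ≤ N (x - 1/2) := hNmono (by linarith)
        have hlt : c * (1/2:ℝ) ^ ((3:ℝ)/2) < b i - a i := by linarith
        have h8 : (1/8:ℝ) ≤ (1/2:ℝ) ^ ((3:ℝ)/2) := by
          have h := Real.rpow_le_rpow_of_exponent_ge (by norm_num : (0:ℝ) < 1/2)
            (by norm_num : (1/2:ℝ) ≤ 1) (by norm_num : (3:ℝ)/2 ≤ 2)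
          rw [show ((2:ℝ)) = ((2:ℕ):ℝ) by norm_num, Real.rpow_natCast] at h
          norm_num at h; linarith
        have hdε : b i - a i ≤ c/8 :=
          le_trans (hlen i).2 (le_trans (min_le_right _ _) (min_le_right _ _))
        nlinarith
    rcases main with hm | hm
    · exact Or.inl ⟨by linarith, by linarith⟩
    · exact Or.inr ⟨by linarith, by linarith⟩
  -- the transformed cover, indexed by parity
  set A : ℕ → ℝ := fun i => if (G i).Nonempty then sInf (G i) - ρ i else 0 with hAdef
  set B : ℕ → ℝ := fun i => if (G i).Nonempty then sInf (G i) + 2 * ρ i else 0 with hBdef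
  set A' : ℕ → ℝ := fun i => if (G i).Nonempty then sSup (G i) - 2 * ρ i else 0 with hA'def
  set B' : ℕ → ℝ := fun i => if (G i).Nonempty then sSup (G i) + ρ i else 0 with hB'def
  refine ⟨fun n => if Even n then A (n/2) else A' (n/2),
          fun n => if Even n then B (n/2) else B' (n/2), ?_, ?_, ?_⟩
  · -- coverage
    intro x hx
    obtain ⟨i, hi⟩ := Set.mem_iUnion.1 (hcov hx.2)
    have hxG : x ∈ G i := ⟨hx.1, hi⟩
    have hPi : (G i).Nonempty := ⟨x, hxG⟩
    rcases claim i x hxG with hm | hm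
    · refine Set.mem_iUnion.2 ⟨2*i, ?_⟩
      have he : Even (2*i) := even_two_mul i
      have hdiv : 2*i/2 = i := by omega
      simp only [if_pos he, hdiv, hAdef, hBdef, if_pos hPi]
      exact hm
    · refine Set.mem_iUnion.2 ⟨2*i+1, ?_⟩
      have he : ¬ Even (2*i+1) := by simp [Nat.even_add_one, parity_simps]
      have hdiv : (2*i+1)/2 = i := by omega
      simp only [if_neg he, hdiv, hA'def, hB'def, if_pos hPi]
      exact hm
  · -- lengths
    have hlen3 : ∀ i, (G i).Nonempty → 0 < ρ i ∧ 3 * ρ i ≤ δ := by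
      intro i hPi
      obtain ⟨x, hxG⟩ := hPi
      have hd0 : 0 < b i - a i := by
        have := hxG.2; simp only [Set.mem_preimage, Set.mem_Ioo] at this; linarith [this.1, this.2]
      have hρi : ρ i = ((b i - a i) / c) ^ ((2:ℝ)/3) := rfl
      constructor
      · rw [hρi]; positivity
      · have h23 : (b i - a i) ^ ((2:ℝ)/3) ≤ δ / K := by
          have h2 : b i - a i ≤ (δ / K) ^ ((3:ℝ)/2) := le_trans (hlen i).2 (min_le_left _ _)
          calc (b i - a i) ^ ((2:ℝ)/3) ≤ ((δ / K) ^ ((3:ℝ)/2)) ^ ((2:ℝ)/3) :=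
                Real.rpow_le_rpow hd0.le h2 (by norm_num)
            _ = δ / K := by
                rw [← Real.rpow_mul (by positivity : (0:ℝ) ≤ δ / K)]
                norm_num
        have hρK : 3 * ρ i = K * (b i - a i) ^ ((2:ℝ)/3) := by
          rw [hρi, Real.div_rpow hd0.le hc0.le, hKdef]; ring
        rw [hρK]
        calc K * (b i - a i) ^ ((2:ℝ)/3) ≤ K * (δ / K) :=
              mul_le_mul_of_nonneg_left h23 hK0.le
          _ = δ := by field_simp
    intro n
    by_cases he : Even n <;> by_cases hPi : (G (n/2)).Nonempty <;>
      simp only [if_pos, if_neg, he, hAdef, hBdef, hA'def, hB'def, hPi, if_true, if_false,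
        ite_true, ite_false]
    · obtain ⟨h1, h2⟩ := hlen3 _ hPi
      constructor <;> [linarith; linarith]
    · constructor <;> simp [hδ.le]
    · obtain ⟨h1, h2⟩ := hlen3 _ hPi
      constructor <;> [linarith; linarith]
    · constructor <;> simp [hδ.le]
  · -- cost
    have perindex : ∀ i, (G i).Nonempty →
        omegaS s (3 * ρ i) ≤ 3 ^ s * omegaS s (b i - a i) := by
      intro i hPi
      obtain ⟨x, hxG⟩ := hPi
      have hd0 : 0 < b i - a i := by
        have := hxG.2; simp only [Set.mem_preimage, Set.mem_Ioo] at this; linarith [this.1, this.2]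
      have hρi : ρ i = ((b i - a i) / c) ^ ((2:ℝ)/3) := rfl
      have hρ0 : 0 < ρ i := by rw [hρi]; positivity
      have hρK : 3 * ρ i = K * (b i - a i) ^ ((2:ℝ)/3) := by
        rw [hρi, Real.div_rpow hd0.le hc0.le, hKdef]; ring
      refine omega_key hs (by norm_num) hK1 hd0 ?_ (by linarith) (le_of_eq hρK)
      have h1 : b i - a i ≤ Real.exp (-(6 * Real.log K + 6)) :=
        le_trans (hlen i).2 (le_trans (min_le_right _ _) (min_le_left _ _))
      calc Real.log (b i - a i) ≤ Real.log (Real.exp (-(6 * Real.log K + 6))) :=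
            Real.log_le_log hd0 h1
        _ = -(6 * Real.log K + 6) := Real.log_exp _
    have bnd : ∀ i, ENNReal.ofReal (omegaS s (B i - A i)) ≤
        ENNReal.ofReal ((3:ℝ) ^ s) * ENNReal.ofReal (omegaS s (b i - a i)) := by
      intro i
      rw [← ENNReal.ofReal_mul (Real.rpow_nonneg (by norm_num : (0:ℝ) ≤ 3) s)]
      by_cases hPi : (G i).Nonempty
      · have : B i - A i = 3 * ρ i := by
          simp only [hAdef, hBdef, if_pos hPi]; ring
        rw [this]
        exact ENNReal.ofReal_le_ofReal (perindex i hPi)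
      · have : B i - A i = 0 := by simp only [hAdef, hBdef, if_neg hPi]; ring
        rw [this]; simp [omegaS]
    have bnd' : ∀ i, ENNReal.ofReal (omegaS s (B' i - A' i)) ≤
        ENNReal.ofReal ((3:ℝ) ^ s) * ENNReal.ofReal (omegaS s (b i - a i)) := by
      intro i
      rw [← ENNReal.ofReal_mul (Real.rpow_nonneg (by norm_num : (0:ℝ) ≤ 3) s)]
      by_cases hPi : (G i).Nonempty
      · have : B' i - A' i = 3 * ρ i := by
          simp only [hA'def, hB'def, if_pos hPi]; ring
        rw [this]
        exact ENNReal.ofReal_le_ofReal (perindex i hPi)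
      · have : B' i - A' i = 0 := by simp only [hA'def, hB'def, if_neg hPi]; ring
        rw [this]; simp [omegaS]
    set f : ℕ → ℝ≥0∞ := fun n =>
      ENNReal.ofReal (omegaS s ((if Even n then B (n/2) else B' (n/2)) -
        (if Even n then A (n/2) else A' (n/2)))) with hfdef
    have hsplit : ∑' n, f n = (∑' k, f (2*k)) + ∑' k, f (2*k+1) :=
      (tsum_even_add_odd ENNReal.summable ENNReal.summable).symm
    have hfe : ∀ k, f (2*k) = ENNReal.ofReal (omegaS s (B k - A k)) := by
      intro k
      have he : Even (2*k) := even_two_mul k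
      have hdiv : 2*k/2 = k := by omega
      simp only [hfdef, if_pos he, hdiv]
    have hfo : ∀ k, f (2*k+1) = ENNReal.ofReal (omegaS s (B' k - A' k)) := by
      intro k
      have he : ¬ Even (2*k+1) := by simp [Nat.even_add_one, parity_simps]
      have hdiv : (2*k+1)/2 = k := by omega
      simp only [hfdef, if_neg he, hdiv]
    calc ∑' n, f n = (∑' k, f (2*k)) + ∑' k, f (2*k+1) := hsplit
      _ ≤ (ENNReal.ofReal ((3:ℝ) ^ s) * ∑' i, ENNReal.ofReal (omegaS s (b i - a i))) +
          ENNReal.ofReal ((3:ℝ) ^ s) * ∑' i, ENNReal.ofReal (omegaS s (b i - a i)) := by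
        refine add_le_add ?_ ?_
        · rw [← ENNReal.tsum_mul_left]
          refine ENNReal.tsum_le_tsum fun k => ?_
          rw [hfe k]; exact bnd k
        · rw [← ENNReal.tsum_mul_left]
          refine ENNReal.tsum_le_tsum fun k => ?_
          rw [hfo k]; exact bnd' k
      _ ≤ ENNReal.ofReal ((3:ℝ) ^ (s+1)) * ∑' i, ENNReal.ofReal (omegaS s (b i - a i)) := by
        rw [← two_mul, ← mul_assoc]
        refine mul_le_mul_left ?_ _
        have h2 : (2:ℝ≥0∞) * ENNReal.ofReal ((3:ℝ) ^ s) = ENNReal.ofReal (2 * 3 ^ s) := by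
          rw [ENNReal.ofReal_mul (by norm_num : (0:ℝ) ≤ 2), ENNReal.ofReal_ofNat]
        rw [h2]
        refine ENNReal.ofReal_le_ofReal ?_
        rw [Real.rpow_add (by norm_num : (0:ℝ) < 3), Real.rpow_one]
        nlinarith [Real.rpow_nonneg (by norm_num : (0:ℝ) ≤ 3) s]

/-- Proposition 1.4 (abstract form): if `𝒩` is a continuous non-decreasing function mapping
the compact set `Σ` onto `[0,1]`, locally constant off `Σ`, and satisfying the two-sided
Hölder bounds `c ε^{3/2} ≤ 𝒩(E+ε) - 𝒩(E-ε) ≤ c⁻¹ ε^{1/2}` on `Σ`, then for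
`F = Σ ∩ 𝒩⁻¹(D)` one has `3^{-s} ℋ^{ω_s}(D) ≤ ℋ^{ω_s}(F) ≤ 3^{s+1} ℋ^{ω_s}(D)`. -/
theorem gaugeHaus_comparison_IDS (Spec : Set ℝ) (hSpec : IsCompact Spec)
    (N : ℝ → ℝ) (hNcont : Continuous N) (hNmono : Monotone N)
    (hNsurj : N '' Spec = Set.Icc (0 : ℝ) 1)
    (hNloc : ∀ x ∉ Spec, ∀ᶠ y in nhds x, N y = N x)
    (c : ℝ) (hc0 : 0 < c) (hc1 : c < 1)
    (hreg : ∀ E ∈ Spec, ∀ ε : ℝ, 0 < ε → ε < 1 →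
      c * ε ^ (3 / 2 : ℝ) ≤ N (E + ε) - N (E - ε) ∧
      N (E + ε) - N (E - ε) ≤ c⁻¹ * ε ^ (1 / 2 : ℝ))
    (D : Set ℝ) (hD : D ⊆ Set.Icc (0 : ℝ) 1) (s : ℝ) (hs : 0 < s) :
    ENNReal.ofReal ((3 : ℝ) ^ (-s)) * gaugeHaus (omegaS s) D
        ≤ gaugeHaus (omegaS s) (Spec ∩ N ⁻¹' D) ∧
    gaugeHaus (omegaS s) (Spec ∩ N ⁻¹' D)
        ≤ ENNReal.ofReal ((3 : ℝ) ^ (s + 1)) * gaugeHaus (omegaS s) D := by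
  have hF0 : (ENNReal.ofReal ((3:ℝ) ^ s)) ≠ 0 :=
    (ENNReal.ofReal_pos.2 (Real.rpow_pos_of_pos (by norm_num) _)).ne'
  have hF0' : (ENNReal.ofReal ((3:ℝ) ^ (s+1))) ≠ 0 :=
    (ENNReal.ofReal_pos.2 (Real.rpow_pos_of_pos (by norm_num) _)).ne'
  constructor
  · have key1 : gaugeHaus (omegaS s) D ≤
        ENNReal.ofReal ((3:ℝ) ^ s) * gaugeHaus (omegaS s) (Spec ∩ N ⁻¹' D) :=
      transfer (omegaS s) (Spec ∩ N ⁻¹' D) D _ hF0 ENNReal.ofReal_ne_top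
        (fun δ hδ => part1 Spec N hNmono hNsurj c hc0 hc1 hreg D hD s hs δ hδ)
    calc ENNReal.ofReal ((3:ℝ) ^ (-s)) * gaugeHaus (omegaS s) D
        ≤ ENNReal.ofReal ((3:ℝ) ^ (-s)) *
          (ENNReal.ofReal ((3:ℝ) ^ s) * gaugeHaus (omegaS s) (Spec ∩ N ⁻¹' D)) :=
          mul_le_mul_right key1 _
      _ = gaugeHaus (omegaS s) (Spec ∩ N ⁻¹' D) := by
          rw [← mul_assoc, ← ENNReal.ofReal_mul (Real.rpow_nonneg (by norm_num) (-s)),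
            ← Real.rpow_add (by norm_num : (0:ℝ) < 3), neg_add_cancel, Real.rpow_zero,
            ENNReal.ofReal_one, one_mul]
  · exact transfer (omegaS s) D (Spec ∩ N ⁻¹' D) _ hF0' ENNReal.ofReal_ne_top
      (fun δ hδ => part2 Spec hSpec N hNmono c hc0 hc1 hreg D s hs δ hδ)
end
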